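/- arXiv:2306.04330 — 6 statements merged into one kernel-verified Lean document; each statement's English description precedes it below -/
import Mathlib

section
/- Let r ≥ 2 and let k_1, ..., k_r be positive integers with k_r = min{k_i : 2 ≤ i ≤ r}. For a positive integer n with n ≥ k_1 + k_i for every i ∈ [2, r-1] and n > k_1 + k_r, define g(s) = C(n,k_1) - C(n-s,k_1) + Σ_{i=2}^{r} C(n-s, k_i - s) for 1 ≤ s ≤ k_r. Then max{g(s) : 1 ≤ s ≤ k_r} equals g(1) or g(k_r). -/
open Finset

private lemma choose_ident (m b : ℕ) :
    (m + 1 - b) * (m + 1).choose b = (m + 1) * m.choose b := by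
  rcases b with _ | c
  · simp
  rcases le_or_gt (c + 1) (m + 1) with hb | hb
  · have h1 : (m + 1).choose (c + 1) = m.choose c + m.choose (c + 1) :=
      Nat.choose_succ_succ m c
    have h2 : (m + 1) * m.choose c = (m + 1).choose (c + 1) * (c + 1) :=
      Nat.add_one_mul_choose_eq m c
    have hc : c ≤ m := by omega
    zify [hb]
    have h1' : ((m + 1).choose (c + 1) : ℤ) = m.choose c + m.choose (c + 1) := by
      exact_mod_cast h1
    have h2' : ((m : ℤ) + 1) * m.choose c = (m + 1).choose (c + 1) * (c + 1) := by
      exact_mod_cast h2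
    nlinarith [h1', h2']
  · have h1 : m.choose (c + 1) = 0 := Nat.choose_eq_zero_of_lt (by omega)
    have h2 : (m + 1).choose (c + 1) = 0 := Nat.choose_eq_zero_of_lt hb
    simp [h1, h2]

private lemma ratio_mono (m a b : ℕ) (hab : a ≤ b) :
    m.choose b * (m + 1).choose a ≤ (m + 1).choose b * m.choose a := by
  rcases le_or_gt b m with hbm | hbm
  · have e1 : (m + 1 - a) * (m.choose b * (m + 1).choose a)
        = (m + 1) * m.choose b * m.choose a := by
      rw [show (m + 1 - a) * (m.choose b * (m + 1).choose a)
          = m.choose b * ((m + 1 - a) * (m + 1).choose a) by ring, choose_ident]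
      ring
    have e2 : (m + 1 - b) * ((m + 1).choose b * m.choose a)
        = (m + 1) * m.choose b * m.choose a := by
      rw [show (m + 1 - b) * ((m + 1).choose b * m.choose a)
          = ((m + 1 - b) * (m + 1).choose b) * m.choose a by ring, choose_ident]
      try ring
    have key : (m + 1 - a) * (m.choose b * (m + 1).choose a)
        ≤ (m + 1 - a) * ((m + 1).choose b * m.choose a) := by
      rw [e1, ← e2]
      exact Nat.mul_le_mul_right _ (by omega)
    exact Nat.le_of_mul_le_mul_left key (by omega)
  · rw [Nat.choose_eq_zero_of_lt hbm]
    simp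

private lemma sum_step {ι : Type*} (t : Finset ι) (a : ℕ) (b : ι → ℕ)
    (hab : ∀ i ∈ t, a ≤ b i) (m : ℕ)
    (h : ∑ i ∈ t, m.choose (b i) ≤ m.choose a) :
    ∑ i ∈ t, (m - 1).choose (b i) ≤ (m - 1).choose a := by
  rcases Nat.eq_zero_or_pos m with rfl | hm
  · simpa using h
  obtain ⟨m', rfl⟩ : ∃ m', m = m' + 1 := ⟨m - 1, by omega⟩
  simp only [Nat.add_sub_cancel]
  rcases Nat.eq_zero_or_pos ((m' + 1).choose a) with hca | hca
  · have ha : m' + 1 < a := by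
      by_contra h'
      exact absurd hca (Nat.choose_pos (Nat.le_of_not_lt h')).ne'
    have hz : ∀ i ∈ t, m'.choose (b i) = 0 := fun i hi =>
      Nat.choose_eq_zero_of_lt (by have := hab i hi; omega)
    rw [Finset.sum_eq_zero hz]
    exact Nat.zero_le _
  · have key : (∑ i ∈ t, m'.choose (b i)) * (m' + 1).choose a
        ≤ (∑ i ∈ t, (m' + 1).choose (b i)) * m'.choose a := by
      rw [Finset.sum_mul, Finset.sum_mul]
      exact Finset.sum_le_sum fun i hi => ratio_mono m' a (b i) (hab i hi)
    have key2 : (∑ i ∈ t, (m' + 1).choose (b i)) * m'.choose a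
        ≤ (m' + 1).choose a * m'.choose a :=
      Nat.mul_le_mul_right _ h
    have key3 : (∑ i ∈ t, m'.choose (b i)) * (m' + 1).choose a
        ≤ m'.choose a * (m' + 1).choose a := by
      calc (∑ i ∈ t, m'.choose (b i)) * (m' + 1).choose a
          ≤ (m' + 1).choose a * m'.choose a := le_trans key key2
        _ = m'.choose a * (m' + 1).choose a := by ring
    exact Nat.le_of_mul_le_mul_right key3 hca

theorem stmt_4 (r n : ℕ) (k : ℕ → ℕ) (hr : 2 ≤ r)
    (hkpos : ∀ i ∈ Finset.Icc 1 r, 0 < k i) (hn : 0 < n)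
    (hmin : ∀ i ∈ Finset.Icc 2 r, k r ≤ k i)
    (hni : ∀ i ∈ Finset.Icc 2 (r - 1), k 1 + k i ≤ n)
    (hnr : k 1 + k r < n)
    (g : ℕ → ℕ)
    (hg : ∀ s, g s = n.choose (k 1) - (n - s).choose (k 1)
        + ∑ i ∈ Finset.Icc 2 r, (n - s).choose (k i - s)) :
    ∀ s, 1 ≤ s → s ≤ k r → g s ≤ max (g 1) (g (k r)) := by
  intro s hs1 hs2
  have hk1 : 1 ≤ k 1 := hkpos 1 (by simp [Finset.mem_Icc]; omega)
  have hkr : 1 ≤ k r := hkpos r (by simp [Finset.mem_Icc]; omega)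
  have hb : ∀ i ∈ Finset.Icc 2 r, k 1 + k i ≤ n := by
    intro i hi
    simp only [Finset.mem_Icc] at hi
    rcases eq_or_lt_of_le hi.2 with rfl | hlt
    · exact hnr.le
    · exact hni i (by simp only [Finset.mem_Icc]; omega)
  -- symmetric form of g
  have hgs : ∀ t, t ≤ k r → (g t : ℤ) = (n.choose (k 1) : ℤ)
      - ((n - t).choose (k 1) : ℤ)
      + ∑ i ∈ Finset.Icc 2 r, ((n - t).choose (n - k i) : ℤ) := by
    intro t ht
    rw [hg t]
    have h1 : (n - t).choose (k 1) ≤ n.choose (k 1) :=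
      Nat.choose_le_choose _ (Nat.sub_le n t)
    push_cast [h1]
    congr 1
    refine Finset.sum_congr rfl fun i hi => ?_
    have hbi := hb i hi
    have hki : k r ≤ k i := hmin i hi
    have h2 : n - k i = (n - t) - (k i - t) := by omega
    rw [h2, Nat.choose_symm (show k i - t ≤ n - t by omega)]
  -- the increment formula
  have hd : ∀ t, 1 ≤ t → t + 1 ≤ k r →
      (g (t + 1) : ℤ) - g t = ((n - t - 1).choose (k 1 - 1) : ℤ)
        - ∑ i ∈ Finset.Icc 2 r, ((n - t - 1).choose (n - k i - 1) : ℤ) := by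
    intro t ht1 ht2
    have hm1 : n - (t + 1) = (n - t - 1) := by omega
    rw [hgs (t + 1) ht2, hgs t (by omega), hm1]
    have hnt : n - t = (n - t - 1) + 1 := by omega
    rw [hnt]
    set m := n - t - 1 with hmdef
    simp only [Nat.add_sub_cancel]
    have hA := Nat.choose_succ_succ' m (k 1 - 1)
    rw [show k 1 - 1 + 1 = k 1 by omega] at hA
    have hsum : ∑ i ∈ Finset.Icc 2 r, (((m + 1)).choose (n - k i) : ℤ)
        = ∑ i ∈ Finset.Icc 2 r,
            ((m.choose (n - k i - 1) : ℤ) + (m.choose (n - k i) : ℤ)) := by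
      refine Finset.sum_congr rfl fun i hi => ?_
      have hbi := hb i hi
      have hB := Nat.choose_succ_succ' m (n - k i - 1)
      rw [show n - k i - 1 + 1 = n - k i by omega] at hB
      push_cast [hB]
      ring
    rw [hsum, Finset.sum_add_distrib]
    push_cast [hA]
    ring
  -- a ≤ b i
  have hab : ∀ i ∈ Finset.Icc 2 r, k 1 - 1 ≤ n - k i - 1 := by
    intro i hi
    have := hb i hi
    omega
  -- propagation of nonnegativity of the increment
  have prop : ∀ t, 1 ≤ t → (0 : ℤ) ≤ (g (t + 1) : ℤ) - g t →
      ∀ c, t + c + 1 ≤ k r → (0 : ℤ) ≤ (g (t + c + 1) : ℤ) - g (t + c) := by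
    intro t ht h0 c
    induction c with
    | zero => intro _; simpa using h0
    | succ v ih =>
        intro hv
        have hprev := ih (by omega)
        rw [hd (t + v) (by omega) (by omega)] at hprev
        have hprevN : ∑ i ∈ Finset.Icc 2 r, (n - (t + v) - 1).choose (n - k i - 1)
            ≤ (n - (t + v) - 1).choose (k 1 - 1) := by
          have := hprev
          push_cast at this
          exact_mod_cast by linarith [this]
        have hstep := sum_step (Finset.Icc 2 r) (k 1 - 1) (fun i => n - k i - 1)
          hab (n - (t + v) - 1) hprevN
        rw [hd (t + (v + 1)) (by omega) (by omega)]
        have heq : n - (t + (v + 1)) - 1 = (n - (t + v) - 1) - 1 := by omega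
        rw [heq]
        have : (∑ i ∈ Finset.Icc 2 r,
            (((n - (t + v) - 1) - 1).choose (n - k i - 1) : ℤ))
            ≤ (((n - (t + v) - 1) - 1).choose (k 1 - 1) : ℤ) := by
          exact_mod_cast hstep
        linarith
  -- case split
  by_cases hcase : ∃ t, 1 ≤ t ∧ t + 1 ≤ s ∧ (0 : ℤ) ≤ (g (t + 1) : ℤ) - g t
  · obtain ⟨t, ht1, hts, ht0⟩ := hcase
    -- g s ≤ g (k r)
    have chain : ∀ c, s + c ≤ k r → (g s : ℤ) ≤ g (s + c) := by
      intro c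
      induction c with
      | zero => intro _; simp
      | succ v ih =>
          intro hv
          have h1 := ih (by omega)
          have h2 := prop t ht1 ht0 (s + v - t) (by omega)
          rw [show t + (s + v - t) = s + v by omega] at h2
          have : (g (s + v) : ℤ) ≤ g (s + v + 1) := by linarith
          rw [show s + (v + 1) = s + v + 1 by omega]
          linarith
    have := chain (k r - s) (by omega)
    rw [show s + (k r - s) = k r by omega] at this
    have : g s ≤ g (k r) := by exact_mod_cast this
    exact le_max_of_le_right this
  · push_neg at hcase
    -- g decreasing up to s : g s ≤ g 1
    have chain : ∀ c, 1 + c ≤ s → (g (1 + c) : ℤ) ≤ g 1 := by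
      intro c
      induction c with
      | zero => intro _; simp
      | succ v ih =>
          intro hv
          have h1 := ih (by omega)
          have h2 := hcase (1 + v) (by omega) (by omega)
          rw [show 1 + (v + 1) = (1 + v) + 1 by omega]
          linarith
    have := chain (s - 1) (by omega)
    rw [show 1 + (s - 1) = s by omega] at this
    have : g s ≤ g 1 := by exact_mod_cast this
    exact le_max_of_le_left this
end

section
/- Let r ≥ 2 and let k_1, ..., k_r be positive integers with k_r = min{k_i : 2 ≤ i ≤ r} and k_r ≥ 3. Let n satisfy n ≥ k_1 + k_i for all i ∈ [2, r-1] and n > k_1 + k_r. Define g(s) = C(n,k_1) - C(n-s,k_1) + Σ_{i=2}^{r} C(n-s, k_i - s). Then there is no s with 2 ≤ s ≤ k_r - 1 such that both g(s) ≥ g(s+1) and g(s) ≥ g(s-1) hold (i.e., g has no interior weak local maximum on [1, k_r]). -/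
theorem stmt_5 (r n : ℕ) (k : ℕ → ℕ) (hr : 2 ≤ r)
    (hkpos : ∀ i ∈ Finset.Icc 1 r, 0 < k i) (hn : 0 < n)
    (hmin : ∀ i ∈ Finset.Icc 2 r, k r ≤ k i) (hkr3 : 3 ≤ k r)
    (hni : ∀ i ∈ Finset.Icc 2 (r - 1), k 1 + k i ≤ n)
    (hnr : k 1 + k r < n)
    (g : ℕ → ℕ)
    (hg : ∀ s, g s = n.choose (k 1) - (n - s).choose (k 1)
        + ∑ i ∈ Finset.Icc 2 r, (n - s).choose (k i - s)) :
    ¬ ∃ s, 2 ≤ s ∧ s ≤ k r - 1 ∧ g (s + 1) ≤ g s ∧ g (s - 1) ≤ g s := by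
  rintro ⟨s, hs2, hsle, h1, h2⟩
  have hk1 : 0 < k 1 := hkpos 1 (by simp [Finset.mem_Icc]; omega)
  have hrr : r ∈ Finset.Icc 2 r := by simp [Finset.mem_Icc]; omega
  have hkrs : s + 1 ≤ k r := by omega
  have hki : ∀ i ∈ Finset.Icc 2 r, s + 1 ≤ k i := fun i hi => le_trans hkrs (hmin i hi)
  have hnbig : k 1 + s + 2 ≤ n := by omega
  -- Pascal splitting of the sum at step s → s+1
  have hB1 : ∑ i ∈ Finset.Icc 2 r, (n - s).choose (k i - s)
      = ∑ i ∈ Finset.Icc 2 r, (n - (s+1)).choose (k i - (s+1))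
      + ∑ i ∈ Finset.Icc 2 r, (n - (s+1)).choose (k i - s) := by
    rw [← Finset.sum_add_distrib]
    refine Finset.sum_congr rfl fun i hi => ?_
    have hks := hki i hi
    have h := Nat.choose_succ_succ (n - (s+1)) (k i - (s+1))
    have e1 : n - (s+1) + 1 = n - s := by omega
    have e2 : k i - (s+1) + 1 = k i - s := by omega
    simp only [Nat.succ_eq_add_one] at h
    rw [e1, e2] at h
    exact h
  -- Pascal splitting of the sum at step s-1 → s
  have hB2 : ∑ i ∈ Finset.Icc 2 r, (n - (s-1)).choose (k i - (s-1))
      = ∑ i ∈ Finset.Icc 2 r, (n - s).choose (k i - s)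
      + ∑ i ∈ Finset.Icc 2 r, (n - s).choose (k i - s + 1) := by
    rw [← Finset.sum_add_distrib]
    refine Finset.sum_congr rfl fun i hi => ?_
    have hks := hki i hi
    have h := Nat.choose_succ_succ (n - s) (k i - s)
    have e1 : n - s + 1 = n - (s-1) := by omega
    have e2 : k i - s + 1 = k i - (s-1) := by omega
    simp only [Nat.succ_eq_add_one] at h
    rw [← e1, ← e2]
    exact h
  -- Condition (I): C(n-s-1, k1-1) ≤ Σ C(n-s-1, k_i - s)
  have hI : (n - (s+1)).choose (k 1 - 1)
      ≤ ∑ i ∈ Finset.Icc 2 r, (n - (s+1)).choose (k i - s) := by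
    have e1 : (n - s).choose (k 1)
        = (n - (s+1)).choose (k 1) + (n - (s+1)).choose (k 1 - 1) := by
      have h := Nat.choose_succ_succ (n - (s+1)) (k 1 - 1)
      have e2 : n - (s+1) + 1 = n - s := by omega
      have e3 : k 1 - 1 + 1 = k 1 := by omega
      simp only [Nat.succ_eq_add_one] at h
      rw [e2, e3] at h
      omega
    have le1 : (n - s).choose (k 1) ≤ n.choose (k 1) :=
      Nat.choose_le_choose _ (Nat.sub_le n s)
    rw [hg s, hg (s+1), hB1] at h1
    set a := n.choose (k 1) with ha
    set b := (n - s).choose (k 1) with hb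
    set b' := (n - (s+1)).choose (k 1) with hb'
    set d := (n - (s+1)).choose (k 1 - 1) with hd
    set X := ∑ i ∈ Finset.Icc 2 r, (n - (s+1)).choose (k i - (s+1)) with hX
    set E := ∑ i ∈ Finset.Icc 2 r, (n - (s+1)).choose (k i - s) with hE
    omega
  -- Condition (II): Σ C(n-s, k_i - s + 1) ≤ C(n-s, k1-1)
  have hII : ∑ i ∈ Finset.Icc 2 r, (n - s).choose (k i - s + 1)
      ≤ (n - s).choose (k 1 - 1) := by
    have e1 : (n - (s-1)).choose (k 1)
        = (n - s).choose (k 1) + (n - s).choose (k 1 - 1) := by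
      have h := Nat.choose_succ_succ (n - s) (k 1 - 1)
      have e2 : n - s + 1 = n - (s-1) := by omega
      have e3 : k 1 - 1 + 1 = k 1 := by omega
      simp only [Nat.succ_eq_add_one] at h
      rw [e2, e3] at h
      omega
    have le1 : (n - (s-1)).choose (k 1) ≤ n.choose (k 1) :=
      Nat.choose_le_choose _ (Nat.sub_le n (s-1))
    rw [hg s, hg (s-1), hB2] at h2
    set a := n.choose (k 1) with ha
    set b := (n - s).choose (k 1) with hb
    set b' := (n - (s-1)).choose (k 1) with hb'
    set d := (n - s).choose (k 1 - 1) with hd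
    set X := ∑ i ∈ Finset.Icc 2 r, (n - s).choose (k i - s) with hX
    set E := ∑ i ∈ Finset.Icc 2 r, (n - s).choose (k i - s + 1) with hE
    omega
  -- multiplicative identities
  have hmul : ∀ i ∈ Finset.Icc 2 r,
      (n - s) * (n - (s+1)).choose (k i - s)
        = (k i - s + 1) * (n - s).choose (k i - s + 1) := by
    intro i hi
    have h := Nat.add_one_mul_choose_eq (n - (s+1)) (k i - s)
    have e1 : n - (s+1) + 1 = n - s := by omega
    rw [e1] at h
    rw [h]
    ring
  have hmulk : (n - (s+1)).choose (k 1 - 1) * (n - s)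
      = (n - s).choose (k 1 - 1) * (n - s - (k 1 - 1)) := by
    have h := Nat.choose_mul_succ_eq (n - (s+1)) (k 1 - 1)
    have e1 : n - (s+1) + 1 = n - s := by omega
    rw [e1] at h
    exact h
  -- chain of inequalities
  have key1 : (n - s).choose (k 1 - 1) * (n - s - (k 1 - 1))
      ≤ ∑ i ∈ Finset.Icc 2 r, (k i - s + 1) * (n - s).choose (k i - s + 1) := by
    calc (n - s).choose (k 1 - 1) * (n - s - (k 1 - 1))
        = (n - s) * (n - (s+1)).choose (k 1 - 1) := by rw [← hmulk]; ring
      _ ≤ (n - s) * ∑ i ∈ Finset.Icc 2 r, (n - (s+1)).choose (k i - s) :=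
          Nat.mul_le_mul_left _ hI
      _ = ∑ i ∈ Finset.Icc 2 r, (n - s) * (n - (s+1)).choose (k i - s) := by
          rw [Finset.mul_sum]
      _ = _ := Finset.sum_congr rfl hmul
  have hr1 : r - 1 + 1 = r := by omega
  have key2 : (∑ i ∈ Finset.Icc 2 r, (k i - s + 1) * (n - s).choose (k i - s + 1))
      + (n - s).choose (k r - s + 1)
      ≤ (n - s - (k 1 - 1)) * ∑ i ∈ Finset.Icc 2 r, (n - s).choose (k i - s + 1) := by
    rw [Finset.mul_sum]
    have hsplit : ∀ f : ℕ → ℕ, ∑ i ∈ Finset.Icc 2 r, f i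
        = (∑ i ∈ Finset.Icc 2 (r-1), f i) + f r := by
      intro f
      have h := Finset.sum_Icc_succ_top (a := 2) (b := r - 1) (by omega) f
      rw [hr1] at h
      exact h
    rw [hsplit, hsplit]
    have hterm : ∑ i ∈ Finset.Icc 2 (r-1), (k i - s + 1) * (n - s).choose (k i - s + 1)
        ≤ ∑ i ∈ Finset.Icc 2 (r-1), (n - s - (k 1 - 1)) * (n - s).choose (k i - s + 1) := by
      refine Finset.sum_le_sum fun i hi => ?_
      have h1 := hni i hi
      have h2 : s + 1 ≤ k i := by
        refine hki i ?_
        simp only [Finset.mem_Icc] at hi ⊢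
        omega
      exact Nat.mul_le_mul_right _ (by omega)
    have hlast : (k r - s + 1) * (n - s).choose (k r - s + 1) + (n - s).choose (k r - s + 1)
        ≤ (n - s - (k 1 - 1)) * (n - s).choose (k r - s + 1) := by
      have : (k r - s + 1) + 1 ≤ n - s - (k 1 - 1) := by omega
      calc (k r - s + 1) * (n - s).choose (k r - s + 1) + (n - s).choose (k r - s + 1)
          = ((k r - s + 1) + 1) * (n - s).choose (k r - s + 1) := by ring
        _ ≤ _ := Nat.mul_le_mul_right _ this
    omega
  have key3 : (n - s - (k 1 - 1)) * ∑ i ∈ Finset.Icc 2 r, (n - s).choose (k i - s + 1)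
      ≤ (n - s).choose (k 1 - 1) * (n - s - (k 1 - 1)) := by
    calc (n - s - (k 1 - 1)) * ∑ i ∈ Finset.Icc 2 r, (n - s).choose (k i - s + 1)
        ≤ (n - s - (k 1 - 1)) * (n - s).choose (k 1 - 1) := Nat.mul_le_mul_left _ hII
      _ = _ := by ring
  have hpos : 0 < (n - s).choose (k r - s + 1) :=
    Nat.choose_pos (by omega)
  omega
end

section
/- Let r ≥ 2 and n, k_1, ..., k_r be positive integers such that n ≥ k_i + k_j for all 1 ≤ i < j ≤ r. Let k̄ = min{k_i : i ∈ [r], i ≠ 2}. If k_1 > k_2 and k̄ > 1, then Σ_{i=1}^{r} C(n-1, k_i - 1) ≥ C(n, k_2) - C(n-k̄, k_2) + Σ_{i ∈ [r], i ≠ 2} C(n-k̄, k_i - k̄), with equality if and only if r = 2 and n = k_1 + k_2. -/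
private lemma step_le' {m t : ℕ} (h : 2*t+1 ≤ m) : m.choose t ≤ m.choose (t+1) := by
  have key := Nat.choose_succ_right_eq m t
  have h1 : m.choose t * (t+1) ≤ m.choose t * (m - t) :=
    Nat.mul_le_mul_left _ (by omega)
  rw [← key] at h1
  exact Nat.le_of_mul_le_mul_right h1 (by omega)

private lemma step_lt' {m t : ℕ} (h : 2*t+2 ≤ m) : m.choose t < m.choose (t+1) := by
  have key := Nat.choose_succ_right_eq m t
  have hpos : 0 < m.choose t := Nat.choose_pos (by omega)
  have h1 : m.choose t * (t+1) < m.choose t * (m - t) :=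
    mul_lt_mul_of_pos_left (by omega) hpos
  rw [← key] at h1
  exact Nat.lt_of_mul_lt_mul_right h1

private lemma mono_half' (m b : ℕ) : ∀ a, b ≤ a → 2*a ≤ m → m.choose b ≤ m.choose a := by
  intro a
  induction a with
  | zero => intro h _; have : b = 0 := by omega
            subst this; exact le_rfl
  | succ a ih =>
    intro hba h
    rcases Nat.lt_or_ge b (a+1) with hlt | hge
    · exact le_trans (ih (by omega) (by omega)) (step_le' (by omega))
    · have : b = a+1 := by omega
      subst this; exact le_rfl

private lemma choose_le_choose_of' (m b a : ℕ) (hba : b ≤ a) (h : a + b ≤ m) :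
    m.choose b ≤ m.choose a := by
  rcases le_or_gt (2*a) m with h2 | h2
  · exact mono_half' m b a hba h2
  · have ha : a ≤ m := by omega
    rw [← Nat.choose_symm ha]
    exact mono_half' m b (m-a) (by omega) (by omega)

private lemma choose_lt_choose_of' (m b a : ℕ) (hba : b < a) (h : a + b < m) :
    m.choose b < m.choose a :=
  lt_of_lt_of_le (step_lt' (by omega)) (choose_le_choose_of' m (b+1) a hba (by omega))

private lemma chainL' (b a u : ℕ) (hba : b ≤ a) (hu : a + b ≤ u) :
    ∀ v, u ≤ v → u.choose (a+1) + v.choose (b+1) ≤ v.choose (a+1) + u.choose (b+1) := by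
  intro v hv
  induction v, hv using Nat.le_induction with
  | base => omega
  | succ v hv ih =>
    rw [Nat.choose_succ_succ v a, Nat.choose_succ_succ v b]
    simp only [Nat.succ_eq_add_one]
    have := choose_le_choose_of' v b a hba (by omega)
    omega

private lemma mainL' {b a u v : ℕ} (hb : 1 ≤ b) (hba : b ≤ a) (hav : a + b ≤ v)
    (hau : a ≤ u) (huv : u ≤ v) :
    u.choose a + v.choose b ≤ v.choose a + u.choose b := by
  rcases le_or_gt (a + b) (u+1) with hc | hc
  · obtain ⟨b', rfl⟩ : ∃ b', b = b'+1 := ⟨b-1, by omega⟩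
    obtain ⟨a', rfl⟩ : ∃ a', a = a'+1 := ⟨a-1, by omega⟩
    exact chainL' b' a' u (by omega) (by omega) v huv
  · have h1 : u.choose a ≤ u.choose b := by
      rw [← Nat.choose_symm hau]
      exact choose_le_choose_of' u (u-a) b (by omega) (by omega)
    have h2 : v.choose b ≤ v.choose a := choose_le_choose_of' v b a hba hav
    omega

private lemma mainLstrict' {b a u v : ℕ} (hb : 1 ≤ b) (hba : b < a) (hav : a + b ≤ v)
    (hau : a ≤ u) (huv : u < v) :
    u.choose a + v.choose b < v.choose a + u.choose b := by
  rcases le_or_gt (a + b) (u+1) with hc | hc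
  · obtain ⟨b', rfl⟩ : ∃ b', b = b'+1 := ⟨b-1, by omega⟩
    obtain ⟨a', rfl⟩ : ∃ a', a = a'+1 := ⟨a-1, by omega⟩
    have hch := chainL' b' a' (u+1) (by omega) (by omega) v (by omega)
    have hp1 := Nat.choose_succ_succ u a'
    have hp2 := Nat.choose_succ_succ u b'
    simp only [Nat.succ_eq_add_one] at hp1 hp2
    have hbase : u.choose b' < u.choose a' := choose_lt_choose_of' u b' a' (by omega) (by omega)
    omega
  · have h1 : u.choose a < u.choose b := by
      rw [← Nat.choose_symm hau]
      exact choose_lt_choose_of' u (u-a) b (by omega) (by omega)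
    have h2 : v.choose b ≤ v.choose a := choose_le_choose_of' v b a (by omega) hav
    omega

private lemma ssub' {c m : ℕ} (hc : 1 ≤ c) (hcm : c < m) :
    (m-1).choose (c-1) < m.choose c := by
  obtain ⟨c', rfl⟩ : ∃ c', c = c'+1 := ⟨c-1, by omega⟩
  obtain ⟨m', rfl⟩ : ∃ m', m = m'+1 := ⟨m-1, by omega⟩
  simp only [Nat.add_sub_cancel]
  rw [Nat.choose_succ_succ]
  simp only [Nat.succ_eq_add_one]
  have : 0 < m'.choose (c'+1) := Nat.choose_pos (by omega)
  omega

private lemma choose_sub_lt' : ∀ (t c m : ℕ), 1 ≤ t → t ≤ c → c < m →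
    (m - t).choose (c - t) < m.choose c := by
  intro t
  induction t with
  | zero => intro c m h1 _ _; omega
  | succ t ih =>
    intro c m _ htc hcm
    rcases Nat.eq_zero_or_pos t with rfl | ht
    · simpa using ssub' (by omega) hcm
    · have e1 : m - (t+1) = (m-1) - t := by omega
      have e2 : c - (t+1) = (c-1) - t := by omega
      rw [e1, e2]
      exact lt_of_lt_of_le (ih (c-1) (m-1) ht (by omega) (by omega))
        (le_of_lt (ssub' (by omega) hcm))

theorem stmt_6 (r n : ℕ) (k : ℕ → ℕ) (kb : ℕ) (hr : 2 ≤ r) (hn : 0 < n)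
    (hkpos : ∀ i ∈ Finset.Icc 1 r, 0 < k i)
    (hnij : ∀ i ∈ Finset.Icc 1 r, ∀ j ∈ Finset.Icc 1 r, i < j → k i + k j ≤ n)
    (hkb_le : ∀ i ∈ Finset.Icc 1 r, i ≠ 2 → kb ≤ k i)
    (hkb_mem : ∃ i ∈ Finset.Icc 1 r, i ≠ 2 ∧ k i = kb)
    (h12 : k 2 < k 1) (hkb1 : 1 < kb) :
    (n.choose (k 2) - (n - kb).choose (k 2)
        + ∑ i ∈ (Finset.Icc 1 r).filter (fun i => i ≠ 2), (n - kb).choose (k i - kb))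
      ≤ ∑ i ∈ Finset.Icc 1 r, (n - 1).choose (k i - 1)
    ∧ ((∑ i ∈ Finset.Icc 1 r, (n - 1).choose (k i - 1)
        = n.choose (k 2) - (n - kb).choose (k 2)
          + ∑ i ∈ (Finset.Icc 1 r).filter (fun i => i ≠ 2), (n - kb).choose (k i - kb))
        ↔ r = 2 ∧ n = k 1 + k 2) := by
  have h1S : (1:ℕ) ∈ Finset.Icc 1 r := Finset.mem_Icc.mpr ⟨le_rfl, by omega⟩
  have h2S : (2:ℕ) ∈ Finset.Icc 1 r := Finset.mem_Icc.mpr ⟨by omega, hr⟩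
  have hk1 : 0 < k 1 := hkpos 1 h1S
  have hk2 : 0 < k 2 := hkpos 2 h2S
  have h12n : k 1 + k 2 ≤ n := hnij 1 h1S 2 h2S (by omega)
  have hkbk1 : kb ≤ k 1 := hkb_le 1 h1S (by omega)
  -- Pascal
  have hP : n.choose (k 2) = (n-1).choose (k 2 - 1) + (n-1).choose (k 2) := by
    obtain ⟨m, rfl⟩ : ∃ m, n = m + 1 := ⟨n-1, by omega⟩
    obtain ⟨c, hc⟩ : ∃ c, k 2 = c + 1 := ⟨k 2 - 1, by omega⟩
    rw [hc]
    simp [Nat.choose_succ_succ]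
  have hQ : (n - kb).choose (k 2) ≤ (n-1).choose (k 2) :=
    Nat.choose_le_choose _ (by omega)
  -- symmetry rewrites
  have hs1 : (n-1).choose (n - k 1) = (n-1).choose (k 1 - 1) := by
    have h' : (n-1) - (k 1 - 1) = n - k 1 := by omega
    rw [← h', Nat.choose_symm (by omega)]
  have hs2 : (n-kb).choose (n - k 1) = (n-kb).choose (k 1 - kb) := by
    have h' : (n-kb) - (k 1 - kb) = n - k 1 := by omega
    rw [← h', Nat.choose_symm (by omega)]
  -- main inequality for index 1
  have hmain : (n-kb).choose (k 1 - kb) + (n-1).choose (k 2)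
      ≤ (n-1).choose (k 1 - 1) + (n-kb).choose (k 2) := by
    have h := mainL' (b := k 2) (a := n - k 1) (u := n - kb) (v := n - 1)
      hk2 (by omega) (by omega) (by omega) (by omega)
    rwa [hs1, hs2] at h
  -- sum decompositions
  have hF : (Finset.Icc 1 r).filter (fun i => i ≠ 2) = (Finset.Icc 1 r).erase 2 := by
    ext x
    simp only [Finset.mem_filter, Finset.mem_erase]
    tauto
  have h1E : (1:ℕ) ∈ (Finset.Icc 1 r).erase 2 := Finset.mem_erase.mpr ⟨by omega, h1S⟩
  have eA : ∑ i ∈ Finset.Icc 1 r, (n-1).choose (k i - 1)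
      = (n-1).choose (k 2 - 1) + ((n-1).choose (k 1 - 1)
        + ∑ i ∈ ((Finset.Icc 1 r).erase 2).erase 1, (n-1).choose (k i - 1)) := by
    rw [← Finset.add_sum_erase _ _ h2S, ← Finset.add_sum_erase _ _ h1E]
  have eB : ∑ i ∈ (Finset.Icc 1 r).filter (fun i => i ≠ 2), (n - kb).choose (k i - kb)
      = (n-kb).choose (k 1 - kb)
        + ∑ i ∈ ((Finset.Icc 1 r).erase 2).erase 1, (n-kb).choose (k i - kb) := by
    rw [hF, ← Finset.add_sum_erase _ _ h1E]
  -- strict per-element bound on E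
  have hE : ∀ i ∈ ((Finset.Icc 1 r).erase 2).erase 1,
      (n - kb).choose (k i - kb) < (n-1).choose (k i - 1) := by
    intro i hi
    have hi1 : i ≠ 1 := (Finset.mem_erase.mp hi).1
    have hi' := (Finset.mem_erase.mp hi).2
    have hi2 : i ≠ 2 := (Finset.mem_erase.mp hi').1
    have hiI : i ∈ Finset.Icc 1 r := (Finset.mem_erase.mp hi').2
    have hir := Finset.mem_Icc.mp hiI
    have hki : 0 < k i := hkpos i hiI
    have hkbi : kb ≤ k i := hkb_le i hiI hi2
    have hkin : k 2 + k i ≤ n := hnij 2 h2S i hiI (by omega)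
    have h := choose_sub_lt' (kb-1) (k i - 1) (n-1) (by omega) (by omega) (by omega)
    have e1 : n - 1 - (kb - 1) = n - kb := by omega
    have e2 : k i - 1 - (kb - 1) = k i - kb := by omega
    rwa [e1, e2] at h
  have hsumE : ∑ i ∈ ((Finset.Icc 1 r).erase 2).erase 1, (n-kb).choose (k i - kb)
      ≤ ∑ i ∈ ((Finset.Icc 1 r).erase 2).erase 1, (n-1).choose (k i - 1) :=
    Finset.sum_le_sum (fun i hi => le_of_lt (hE i hi))
  constructor
  · rw [eA, eB]
    omega
  constructor
  · intro heq
    rw [eA, eB] at heq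
    have hr2 : r = 2 := by
      by_contra hr3
      have h3E : 3 ∈ ((Finset.Icc 1 r).erase 2).erase 1 :=
        Finset.mem_erase.mpr ⟨by omega,
          Finset.mem_erase.mpr ⟨by omega, Finset.mem_Icc.mpr ⟨by omega, by omega⟩⟩⟩
      have hstrict : ∑ i ∈ ((Finset.Icc 1 r).erase 2).erase 1, (n-kb).choose (k i - kb)
          < ∑ i ∈ ((Finset.Icc 1 r).erase 2).erase 1, (n-1).choose (k i - 1) :=
        Finset.sum_lt_sum (fun i hi => le_of_lt (hE i hi)) ⟨3, h3E, hE 3 h3E⟩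
      omega
    have hn2 : n = k 1 + k 2 := by
      by_contra hne
      have hlt : k 1 + k 2 < n := by omega
      have hms : (n-kb).choose (k 1 - kb) + (n-1).choose (k 2)
          < (n-1).choose (k 1 - 1) + (n-kb).choose (k 2) := by
        have h := mainLstrict' (b := k 2) (a := n - k 1) (u := n - kb) (v := n - 1)
          hk2 (by omega) (by omega) (by omega) (by omega)
        rwa [hs1, hs2] at h
      omega
    exact ⟨hr2, hn2⟩
  · rintro ⟨hr2, hn2⟩
    subst hr2
    obtain ⟨i, hiI, hi2, hik⟩ := hkb_mem
    have hi1 : i = 1 := by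
      have := Finset.mem_Icc.mp hiI
      omega
    subst hi1
    have hkb : kb = k 1 := hik.symm
    subst hkb
    rw [eA, eB]
    have hEempty : ((Finset.Icc 1 2).erase 2).erase 1 = (∅ : Finset ℕ) := by decide
    rw [hEempty]
    simp only [Finset.sum_empty, add_zero]
    have e1 : k 1 - k 1 = 0 := by omega
    have e2 : n - k 1 = k 2 := by omega
    rw [e1, e2, Nat.choose_zero_right, Nat.choose_self]
    have hsymm : (n-1).choose (k 1 - 1) = (n-1).choose (k 2) := by
      have h' : (n-1) - (k 2) = k 1 - 1 := by omega
      rw [← h', Nat.choose_symm (by omega)]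
    have hpos2 : 0 < (n-1).choose (k 2) := Nat.choose_pos (by omega)
    omega
end

section
/- Let n, k_1, k_2 be positive integers with n ≥ k_1 + k_2, k_1 > k_2, and k_1 > 1. Then C(n-1, k_1 - 1) + C(n-1, k_2 - 1) ≥ C(n, k_2) - C(n - k_1, k_2) + 1, with equality if and only if n = k_1 + k_2. -/
/-- Telescoping: `C(n,k+1) = C(n-a,k+1) + ∑_{i<a} C(n-1-i,k)`. -/
lemma aux_telescope (a n k : ℕ) (h : a ≤ n) :
    n.choose (k+1) = (n-a).choose (k+1) + ∑ i ∈ Finset.range a, (n-1-i).choose k := by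
  induction a with
  | zero => simp
  | succ a ih =>
    have ha : a ≤ n := Nat.le_of_succ_le h
    rw [ih ha, Finset.sum_range_succ]
    have h1 : n - a = (n - (a+1)) + 1 := by omega
    have h2 : n - 1 - a = n - (a+1) := by omega
    rw [h1, Nat.choose_succ_succ, h2]
    ring

/-- Choose is monotone in the lower index up to the middle. -/
lemma aux_mono {N j l : ℕ} (hjl : j ≤ l) (hl : l + j ≤ N) :
    N.choose j ≤ N.choose l := by
  have step : ∀ t, j + t ≤ N / 2 → N.choose j ≤ N.choose (j + t) := by
    intro t
    induction t with
    | zero => simp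
    | succ t ih =>
      intro h
      have h1 : j + t < N / 2 := by omega
      calc N.choose j ≤ N.choose (j+t) := ih (by omega)
        _ ≤ N.choose (j+t+1) := Nat.choose_le_succ_of_lt_half_left h1
  rcases le_total l (N - l) with h | h
  · have := step (l - j) (by omega)
    rwa [show j + (l - j) = l by omega] at this
  · have hsym : N.choose (N - l) = N.choose l := Nat.choose_symm (by omega)
    have := step ((N - l) - j) (by omega)
    rwa [show j + ((N - l) - j) = N - l by omega, hsym] at this

theorem stmt_7 (n k₁ k₂ : ℕ) (hk₂ : 0 < k₂) (hk₁ : 1 < k₁) (h12 : k₂ < k₁)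
    (hn : k₁ + k₂ ≤ n) :
    n.choose k₂ - (n - k₁).choose k₂ + 1 ≤ (n - 1).choose (k₁ - 1) + (n - 1).choose (k₂ - 1)
    ∧ ((n - 1).choose (k₁ - 1) + (n - 1).choose (k₂ - 1)
        = n.choose k₂ - (n - k₁).choose k₂ + 1 ↔ n = k₁ + k₂) := by
  -- substitute: k₂ = b+1, k₁ = b+s+2, n = 2b+s+d+3
  obtain ⟨b, rfl⟩ : ∃ b, k₂ = b + 1 := ⟨k₂ - 1, by omega⟩
  obtain ⟨s, rfl⟩ : ∃ s, k₁ = b + s + 2 := ⟨k₁ - b - 2, by omega⟩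
  obtain ⟨d, rfl⟩ : ∃ d, n = 2*b + s + d + 3 := ⟨n - (2*b+s+3), by omega⟩
  clear hk₂ hk₁ h12 hn
  -- main telescoping identity for C(n, k₂)
  have key : (2*b+s+d+3).choose (b+1)
      = (b+d+1).choose (b+1) + ∑ i ∈ Finset.range (b+s+2), (2*b+s+d+2-i).choose b := by
    have h := aux_telescope (b+s+2) (2*b+s+d+3) b (by omega)
    rw [show 2*b+s+d+3 - (b+s+2) = b+d+1 by omega] at h
    rw [show 2*b+s+d+3-1 = 2*b+s+d+2 from by omega] at h
    rw [h]
  -- split off the i = 0 term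
  have split : ∑ i ∈ Finset.range (b+s+2), (2*b+s+d+2-i).choose b
      = (∑ i ∈ Finset.range (b+s+1), (2*b+s+d+1-i).choose b) + (2*b+s+d+2).choose b := by
    rw [Finset.sum_range_succ']
    have : ∀ i ∈ Finset.range (b+s+1),
        (2*b+s+d+2-(i+1)).choose b = (2*b+s+d+1-i).choose b := by
      intro i hi; congr 1; omega
    rw [Finset.sum_congr rfl this]
    norm_num
  set S := ∑ i ∈ Finset.range (b+s+1), (2*b+s+d+1-i).choose b with hS
  -- hockey stick for C(n-1, k₂)
  have hockey : (2*b+s+d+2).choose (b+1)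
      = S + ∑ i ∈ Finset.Ico (b+s+1) (b+s+d+2), (2*b+s+d+1-i).choose b := by
    have h := aux_telescope (b+s+d+2) (2*b+s+d+2) b (by omega)
    rw [show 2*b+s+d+2 - (b+s+d+2) = b by omega, Nat.choose_succ_self, zero_add] at h
    rw [show 2*b+s+d+2-1 = 2*b+s+d+1 from by omega] at h
    rw [h, ← Finset.sum_range_add_sum_Ico _ (show b+s+1 ≤ b+s+d+2 by omega), hS]
  -- the tail has d+1 terms, each ≥ 1
  have tail_ge : d + 1 ≤ ∑ i ∈ Finset.Ico (b+s+1) (b+s+d+2), (2*b+s+d+1-i).choose b := by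
    have : ∀ i ∈ Finset.Ico (b+s+1) (b+s+d+2), 1 ≤ (2*b+s+d+1-i).choose b := by
      intro i hi
      simp only [Finset.mem_Ico] at hi
      exact Nat.choose_pos (by omega)
    calc d + 1 = ∑ _i ∈ Finset.Ico (b+s+1) (b+s+d+2), 1 := by
          rw [Finset.sum_const, smul_eq_mul, mul_one, Nat.card_Ico]; omega
      _ ≤ _ := Finset.sum_le_sum this
  -- monotonicity: C(n-1, k₁-1) ≥ C(n-1, k₂)
  have mono : (2*b+s+d+2).choose (b+1) ≤ (2*b+s+d+2).choose (b+s+1) :=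
    aux_mono (by omega) (by omega)
  -- simplify the goal's subtraction expressions
  have e1 : 2*b+s+d+3 - (b+s+2) = b+d+1 := by omega
  have e2 : 2*b+s+d+3 - 1 = 2*b+s+d+2 := by omega
  have e3 : b+s+2-1 = b+s+1 := by omega
  have e4 : b+1-1 = b := by omega
  rw [e1, e2, e3, e4, key, split]
  -- now the subtraction is exact
  have hQ : (b+d+1).choose (b+1) + (S + (2*b+s+d+2).choose b) - (b+d+1).choose (b+1) + 1
      = S + (2*b+s+d+2).choose b + 1 := by omega
  rw [hQ]
  have hA : S + (d+1) ≤ (2*b+s+d+2).choose (b+s+1) := by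
    calc S + (d+1) ≤ S + ∑ i ∈ Finset.Ico (b+s+1) (b+s+d+2), (2*b+s+d+1-i).choose b :=
          by omega
      _ = (2*b+s+d+2).choose (b+1) := hockey.symm
      _ ≤ _ := mono
  constructor
  · omega
  · constructor
    · -- equality implies d = 0
      intro h
      by_contra hd
      have hd1 : 1 ≤ d := by omega
      omega
    · -- d = 0 gives equality
      intro h
      have hd : d = 0 := by omega
      subst hd
      -- here C(2b+s+2, b+s+1) = C(2b+s+2, b+1) by symmetry, and tail is a single term = 1
      have hsym : (2*b+s+2).choose (b+s+1) = (2*b+s+2).choose (b+1) := by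
        rw [← Nat.choose_symm (show b+s+1 ≤ 2*b+s+2 by omega),
          show 2*b+s+2 - (b+s+1) = b+1 by omega]
      have htail : ∑ i ∈ Finset.Ico (b+s+1) (b+s+2), (2*b+s+1-i).choose b = 1 := by
        rw [show b+s+2 = (b+s+1)+1 by rfl, Finset.sum_Ico_succ_top (by omega),
          Finset.Ico_self, Finset.sum_empty, zero_add,
          show 2*b+s+1-(b+s+1) = b by omega, Nat.choose_self]
      have := hockey
      rw [htail] at this
      rw [hsym, this]
      ring
end

section
/- Let n, k, l be positive integers with n ≥ 2k. If F_1 ⊆ C([n],k) and F_2 ⊆ C([n],k) are non-empty cross-intersecting families, then |F_1| + |F_2| ≤ C(n,k) - C(n-k,k) + 1. -/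
open Finset
open UV
open scoped FinsetFamily

namespace HMX

variable {j n : ℕ}

/-- compress formula for singletons when it acts -/
lemma compress_eq (A : Finset ℕ) (hn : n ∈ A) (hj : j ∉ A) :
    compress {j} {n} A = insert j (A.erase n) := by
  have hne : j ≠ n := fun h => hj (h ▸ hn)
  rw [compress, if_pos ⟨by simpa using hj, by simpa using hn⟩]
  ext x
  simp [Finset.mem_sdiff, Finset.mem_union, Finset.mem_insert, Finset.mem_erase]
  aesop

lemma compress_eq_self (A : Finset ℕ) (h : n ∉ A ∨ j ∈ A) :
    compress {j} {n} A = A := by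
  rw [compress, if_neg]
  rintro ⟨h1, h2⟩
  simp only [Finset.disjoint_singleton_left, Finset.singleton_subset_iff] at h1 h2
  tauto

lemma exists_of_mem_compression_not_mem {F : Finset (Finset ℕ)} {A : Finset ℕ}
    (h : A ∈ 𝓒 {j} {n} F) (hA : A ∉ F) :
    ∃ A₀ ∈ F, n ∈ A₀ ∧ j ∉ A₀ ∧ A = insert j (A₀.erase n) := by
  rw [mem_compression] at h
  rcases h with ⟨h1, _⟩ | ⟨_, A₀, hA₀, hc⟩
  · exact absurd h1 hA
  by_cases hcase : n ∈ A₀ ∧ j ∉ A₀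
  · exact ⟨A₀, hA₀, hcase.1, hcase.2, by rw [← hc, compress_eq _ hcase.1 hcase.2]⟩
  · rw [compress_eq_self A₀ (by tauto)] at hc
    exact absurd (hc ▸ hA₀) hA

end HMX

namespace HMX

/-- key fact: A ∈ compressed family: either A ∈ F with compress A ∈ F, or A is a moved set. -/
lemma cross_compression {F G : Finset (Finset ℕ)} (j n : ℕ)
    (h : ∀ A ∈ F, ∀ B ∈ G, (A ∩ B).Nonempty) :
    ∀ A ∈ 𝓒 {j} {n} F, ∀ B ∈ 𝓒 {j} {n} G, (A ∩ B).Nonempty := by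
  intro A hA B hB
  by_cases hAF : A ∈ F
  · have hcA : compress {j} {n} A ∈ F := by
      rw [mem_compression] at hA
      rcases hA with ⟨_, h2⟩ | ⟨h1, _⟩
      · exact h2
      · exact absurd hAF h1
    by_cases hBG : B ∈ G
    · exact h A hAF B hBG
    · -- B is a moved set
      obtain ⟨B₀, hB₀, hnB₀, hjB₀, rfl⟩ := exists_of_mem_compression_not_mem hB hBG
      obtain ⟨x, hx⟩ := h A hAF B₀ hB₀
      rw [mem_inter] at hx
      by_cases hxn : x = n
      · -- A contains n
        subst hxn
        by_cases hjA : j ∈ A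
        · exact ⟨j, mem_inter.2 ⟨hjA, mem_insert_self _ _⟩⟩
        · rw [compress_eq A hx.1 hjA] at hcA
          obtain ⟨y, hy⟩ := h _ hcA B₀ hB₀
          rw [mem_inter, mem_insert, mem_erase] at hy
          rcases hy with ⟨(rfl | ⟨hyn, hyA⟩), hyB₀⟩
          · exact absurd hyB₀ hjB₀
          · exact ⟨y, mem_inter.2 ⟨hyA, mem_insert_of_mem (mem_erase.2 ⟨hyn, hyB₀⟩)⟩⟩
      · exact ⟨x, mem_inter.2 ⟨hx.1, mem_insert_of_mem (mem_erase.2 ⟨hxn, hx.2⟩)⟩⟩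
  · obtain ⟨A₀, hA₀, hnA₀, hjA₀, rfl⟩ := exists_of_mem_compression_not_mem hA hAF
    by_cases hBG : B ∈ G
    · have hcB : compress {j} {n} B ∈ G := by
        rw [mem_compression] at hB
        rcases hB with ⟨_, h2⟩ | ⟨h1, _⟩
        · exact h2
        · exact absurd hBG h1
      obtain ⟨x, hx⟩ := h A₀ hA₀ B hBG
      rw [mem_inter] at hx
      by_cases hxn : x = n
      · subst hxn
        by_cases hjB : j ∈ B
        · exact ⟨j, mem_inter.2 ⟨mem_insert_self _ _, hjB⟩⟩
        · rw [compress_eq B hx.2 hjB] at hcB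
          obtain ⟨y, hy⟩ := h A₀ hA₀ _ hcB
          rw [mem_inter, mem_insert, mem_erase] at hy
          rcases hy with ⟨hyA₀, (rfl | ⟨hyn, hyB⟩)⟩
          · exact absurd hyA₀ hjA₀
          · exact ⟨y, mem_inter.2 ⟨mem_insert_of_mem (mem_erase.2 ⟨hyn, hyA₀⟩), hyB⟩⟩
      · exact ⟨x, mem_inter.2 ⟨mem_insert_of_mem (mem_erase.2 ⟨hxn, hx.1⟩), hx.2⟩⟩
    · obtain ⟨B₀, hB₀, hnB₀, hjB₀, rfl⟩ := exists_of_mem_compression_not_mem hB hBG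
      exact ⟨j, mem_inter.2 ⟨mem_insert_self _ _, mem_insert_self _ _⟩⟩

end HMX

namespace HMX

def fmeas (F : Finset (Finset ℕ)) : ℕ := ∑ A ∈ F, ∑ a ∈ A, a

lemma sum_compression (u v : Finset ℕ) (F : Finset (Finset ℕ)) (f : Finset ℕ → ℕ) :
    ∑ A ∈ 𝓒 u v F, f A =
      ∑ A ∈ F.filter (fun A => compress u v A ∈ F), f A
        + ∑ A ∈ F.filter (fun A => compress u v A ∉ F), f (compress u v A) := by
  rw [compression, sum_union compress_disjoint, filter_image,
    sum_image (fun A hA B hB h => compress_injOn (by simpa using hA) (by simpa using hB) h)]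

lemma compression_eq_self_of_filter_empty {u v : Finset ℕ} {F : Finset (Finset ℕ)}
    (h : F.filter (fun A => compress u v A ∉ F) = ∅) : 𝓒 u v F = F := by
  have hall : ∀ A ∈ F, compress u v A ∈ F := by
    intro A hA
    by_contra hc
    have : A ∈ F.filter (fun A => compress u v A ∉ F) := mem_filter.2 ⟨hA, hc⟩
    rw [h] at this
    exact absurd this (notMem_empty A)
  ext A
  rw [mem_compression]
  constructor
  · rintro (⟨h1, _⟩ | ⟨h1, B, hB, rfl⟩)
    · exact h1
    · exact hall B hB
  · intro hA
    exact Or.inl ⟨hA, hall A hA⟩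

lemma fmeas_lt {j n : ℕ} (hjn : j < n) (F : Finset (Finset ℕ))
    (hne : 𝓒 {j} {n} F ≠ F) : fmeas (𝓒 {j} {n} F) < fmeas F := by
  have hfilt : (F.filter (fun A => compress {j} {n} A ∉ F)).Nonempty := by
    rw [Finset.nonempty_iff_ne_empty]
    intro h
    exact hne (compression_eq_self_of_filter_empty h)
  rw [fmeas, fmeas, sum_compression]
  rw [← sum_filter_add_sum_filter_not F (fun A => compress {j} {n} A ∈ F) (fun A => ∑ a ∈ A, a)]
  refine Nat.add_lt_add_left (Finset.sum_lt_sum_of_nonempty hfilt ?_) _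
  intro A hA
  rw [mem_filter] at hA
  have hch : compress {j} {n} A ≠ A := fun h => hA.2 (by rw [h]; exact hA.1)
  have hcond : n ∈ A ∧ j ∉ A := by
    by_contra hc
    exact hch (compress_eq_self A (by tauto))
  rw [compress_eq A hcond.1 hcond.2, Finset.sum_insert (fun h => hcond.2 (mem_of_mem_erase h))]
  have : ∑ x ∈ A.erase n, x + n = ∑ x ∈ A, x := by simpa using Finset.sum_erase_add A (fun a => a) hcond.1
  omega

/-- compression preserves being a subfamily of k-subsets of `Icc 1 n` -/
lemma compression_subset_powersetCard {j n k : ℕ} (hj1 : 1 ≤ j) (hjn : j < n)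
    {F : Finset (Finset ℕ)} (hF : F ⊆ (Finset.Icc 1 n).powersetCard k) :
    𝓒 {j} {n} F ⊆ (Finset.Icc 1 n).powersetCard k := by
  intro A hA
  by_cases hAF : A ∈ F
  · exact hF hAF
  obtain ⟨A₀, hA₀, hnA₀, hjA₀, rfl⟩ := exists_of_mem_compression_not_mem hA hAF
  have h0 := mem_powersetCard.1 (hF hA₀)
  rw [mem_powersetCard]
  constructor
  · intro x hx
    rcases mem_insert.1 hx with rfl | hx
    · rw [mem_Icc]; omega
    · exact h0.1 (mem_of_mem_erase hx)
  · rw [card_insert_of_notMem (fun h => hjA₀ (mem_of_mem_erase h)),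
      card_erase_of_mem hnA₀, h0.2]
    have : 0 < A₀.card := card_pos.2 ⟨n, hnA₀⟩
    omega

end HMX

namespace HMX

lemma exists_shifted (n k : ℕ) :
    ∀ (N : ℕ) (F₁ F₂ : Finset (Finset ℕ)),
    fmeas F₁ + fmeas F₂ ≤ N →
    F₁ ⊆ (Finset.Icc 1 n).powersetCard k →
    F₂ ⊆ (Finset.Icc 1 n).powersetCard k →
    (∀ A ∈ F₁, ∀ B ∈ F₂, (A ∩ B).Nonempty) →
    ∃ G₁ G₂ : Finset (Finset ℕ),
      G₁ ⊆ (Finset.Icc 1 n).powersetCard k ∧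
      G₂ ⊆ (Finset.Icc 1 n).powersetCard k ∧
      (∀ A ∈ G₁, ∀ B ∈ G₂, (A ∩ B).Nonempty) ∧
      G₁.card = F₁.card ∧ G₂.card = F₂.card ∧
      ∀ j, 1 ≤ j → j < n → IsCompressed {j} {n} G₁ ∧ IsCompressed {j} {n} G₂ := by
  intro N
  induction N with
  | zero =>
    intro F₁ F₂ hN h1 h2 hc
    -- measure 0 still might not be compressed? If fmeas = 0; compression can only decrease,
    -- but a compression changing the family strictly decreases measure, impossible at 0.
    refine ⟨F₁, F₂, h1, h2, hc, rfl, rfl, fun j hj1 hjn => ?_⟩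
    constructor <;> {
      by_contra hcon
      have := fmeas_lt hjn _ hcon
      omega
    }
  | succ N ih =>
    intro F₁ F₂ hN h1 h2 hc
    by_cases hdone : ∀ j, 1 ≤ j → j < n → IsCompressed {j} {n} F₁ ∧ IsCompressed {j} {n} F₂
    · exact ⟨F₁, F₂, h1, h2, hc, rfl, rfl, hdone⟩
    push_neg at hdone
    obtain ⟨j, hj1, hjn, hnc⟩ := hdone
    have hlt : fmeas (𝓒 {j} {n} F₁) + fmeas (𝓒 {j} {n} F₂) < fmeas F₁ + fmeas F₂ := by
      have hle1 : fmeas (𝓒 {j} {n} F₁) ≤ fmeas F₁ := by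
        by_cases h : 𝓒 {j} {n} F₁ = F₁
        · rw [h]
        · exact le_of_lt (fmeas_lt hjn _ h)
      have hle2 : fmeas (𝓒 {j} {n} F₂) ≤ fmeas F₂ := by
        by_cases h : 𝓒 {j} {n} F₂ = F₂
        · rw [h]
        · exact le_of_lt (fmeas_lt hjn _ h)
      by_cases h : IsCompressed {j} {n} F₁
      · have := fmeas_lt hjn _ (hnc h)
        omega
      · have := fmeas_lt hjn _ h
        omega
    obtain ⟨G₁, G₂, g1, g2, gc, gc1, gc2, gsh⟩ :=
      ih (𝓒 {j} {n} F₁) (𝓒 {j} {n} F₂) (by omega)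
        (compression_subset_powersetCard hj1 hjn h1)
        (compression_subset_powersetCard hj1 hjn h2)
        (cross_compression j n hc)
    exact ⟨G₁, G₂, g1, g2, gc, gc1.trans (card_compression _ _ _),
      gc2.trans (card_compression _ _ _), gsh⟩

lemma pascal (n k : ℕ) (hn : 1 ≤ n) (hk : 1 ≤ k) :
    n.choose k = (n - 1).choose (k - 1) + (n - 1).choose k := by
  obtain ⟨m, rfl⟩ : ∃ m, n = m + 1 := ⟨n - 1, by omega⟩
  obtain ⟨l, rfl⟩ : ∃ l, k = l + 1 := ⟨k - 1, by omega⟩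
  simp [Nat.choose_succ_succ']

end HMX

namespace HMX

theorem main : ∀ n : ℕ, ∀ k : ℕ, ∀ F₁ F₂ : Finset (Finset ℕ),
    0 < k → 2 * k ≤ n →
    F₁ ⊆ (Finset.Icc 1 n).powersetCard k →
    F₂ ⊆ (Finset.Icc 1 n).powersetCard k →
    F₁.Nonempty → F₂.Nonempty →
    (∀ A ∈ F₁, ∀ B ∈ F₂, (A ∩ B).Nonempty) →
    F₁.card + F₂.card + (n - k).choose k ≤ n.choose k + 1 := by
  intro n
  induction n using Nat.strong_induction_on with
  | _ n ih =>
  intro k F₁ F₂ hk hn hF₁ hF₂ hne₁ hne₂ hcross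
  have hicc : (Finset.Icc 1 n).card = n := by rw [Nat.card_Icc]; omega
  -- case k = 1
  rcases eq_or_lt_of_le (show 1 ≤ k from hk) with hk1 | hk2
  · -- k = 1
    obtain ⟨A₀, hA₀⟩ := hne₁
    obtain ⟨B₀, hB₀⟩ := hne₂
    have hsub1 : F₁ ⊆ {B₀} := by
      intro A hA
      obtain ⟨x, hx⟩ := hcross A hA B₀ hB₀
      rw [mem_inter] at hx
      have h1 := (mem_powersetCard.1 (hF₁ hA)).2
      have h2 := (mem_powersetCard.1 (hF₂ hB₀)).2
      rw [mem_singleton]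
      rw [← hk1] at h1 h2
      rw [Finset.card_eq_one] at h1 h2
      obtain ⟨a, rfl⟩ := h1
      obtain ⟨b, rfl⟩ := h2
      simp only [mem_singleton] at hx
      have : a = b := by omega
      rw [this]
    have hsub2 : F₂ ⊆ {A₀} := by
      intro B hB
      obtain ⟨x, hx⟩ := hcross A₀ hA₀ B hB
      rw [mem_inter] at hx
      have h1 := (mem_powersetCard.1 (hF₁ hA₀)).2
      have h2 := (mem_powersetCard.1 (hF₂ hB)).2
      rw [mem_singleton]
      rw [← hk1] at h1 h2
      rw [Finset.card_eq_one] at h1 h2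
      obtain ⟨a, rfl⟩ := h1
      obtain ⟨b, rfl⟩ := h2
      simp only [mem_singleton] at hx
      have : b = a := by omega
      rw [this]
    have hc1 : F₁.card ≤ 1 := le_trans (card_le_card hsub1) (by simp)
    have hc2 : F₂.card ≤ 1 := le_trans (card_le_card hsub2) (by simp)
    rw [← hk1]
    rw [Nat.choose_one_right, Nat.choose_one_right]
    omega
  -- now k ≥ 2
  rcases eq_or_lt_of_le hn with hn2k | hngt
  · -- base case n = 2k : complement trick
    have hFim : F₂.image (fun B => Finset.Icc 1 n \ B) ⊆ (Finset.Icc 1 n).powersetCard k := by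
      intro A hA
      obtain ⟨B, hB, rfl⟩ := mem_image.1 hA
      have h0 := mem_powersetCard.1 (hF₂ hB)
      rw [mem_powersetCard]
      refine ⟨sdiff_subset, ?_⟩
      rw [card_sdiff_of_subset h0.1, hicc, h0.2]
      omega
    have hdisj : Disjoint F₁ (F₂.image (fun B => Finset.Icc 1 n \ B)) := by
      rw [disjoint_left]
      intro A hA hA'
      obtain ⟨B, hB, hAB⟩ := mem_image.1 hA'
      obtain ⟨x, hx⟩ := hcross A hA B hB
      rw [mem_inter] at hx
      have : x ∈ Finset.Icc 1 n \ B := hAB ▸ hx.1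
      exact (mem_sdiff.1 this).2 hx.2
    have hinj : (F₂.image (fun B => Finset.Icc 1 n \ B)).card = F₂.card := by
      apply Finset.card_image_of_injOn
      intro A hA B hB h
      have hA' := (mem_powersetCard.1 (hF₂ hA)).1
      have hB' := (mem_powersetCard.1 (hF₂ hB)).1
      have : Finset.Icc 1 n \ (Finset.Icc 1 n \ A) = Finset.Icc 1 n \ (Finset.Icc 1 n \ B) := by
        exact congrArg _ h
      rwa [Finset.sdiff_sdiff_eq_self hA', Finset.sdiff_sdiff_eq_self hB'] at this
    have hunion : (F₁ ∪ F₂.image (fun B => Finset.Icc 1 n \ B)).card ≤ n.choose k := by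
      calc (F₁ ∪ F₂.image (fun B => Finset.Icc 1 n \ B)).card
          ≤ ((Finset.Icc 1 n).powersetCard k).card :=
            card_le_card (union_subset hF₁ hFim)
        _ = n.choose k := by rw [card_powersetCard, hicc]
    rw [card_union_of_disjoint hdisj, hinj] at hunion
    have : n - k = k := by omega
    rw [this, Nat.choose_self]
    omega
  -- inductive case : n ≥ 2k + 1, k ≥ 2
  obtain ⟨G₁, G₂, hG₁, hG₂, hGcross, hGc1, hGc2, hGsh⟩ :=
    exists_shifted n k (fmeas F₁ + fmeas F₂) F₁ F₂ le_rfl hF₁ hF₂ hcross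
  have hicc' : (Finset.Icc 1 (n-1)).card = n - 1 := by rw [Nat.card_Icc]; omega
  have hGne₁ : G₁.Nonempty := card_pos.1 (by rw [hGc1]; exact card_pos.2 hne₁)
  have hGne₂ : G₂.Nonempty := card_pos.1 (by rw [hGc2]; exact card_pos.2 hne₂)
  have hshift : ∀ (G : Finset (Finset ℕ)), (∀ j, 1 ≤ j → j < n → IsCompressed {j} {n} G) →
      ∀ A ∈ G, n ∈ A → ∀ j, 1 ≤ j → j < n → j ∉ A → insert j (A.erase n) ∈ G := by
    intro G hsh A hA hnA j h1 h2 hjA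
    have hmem := compress_mem_compression (u := ({j} : Finset ℕ)) (v := ({n} : Finset ℕ)) hA
    rw [(hsh j h1 h2).eq] at hmem
    rwa [compress_eq A hnA hjA] at hmem
  have hshift1 := hshift G₁ (fun j h1 h2 => (hGsh j h1 h2).1)
  have hshift2 := hshift G₂ (fun j h1 h2 => (hGsh j h1 h2).2)
  have hPsub : ∀ (G : Finset (Finset ℕ)), G ⊆ (Finset.Icc 1 n).powersetCard k →
      (G.filter (fun A => n ∉ A)) ⊆ (Finset.Icc 1 (n-1)).powersetCard k := by
    intro G hG A hA
    rw [mem_filter] at hA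
    have h0 := mem_powersetCard.1 (hG hA.1)
    rw [mem_powersetCard]
    refine ⟨fun x hx => ?_, h0.2⟩
    have hx1 := mem_Icc.1 (h0.1 hx)
    rw [mem_Icc]
    have : x ≠ n := fun h => hA.2 (h ▸ hx)
    omega
  have hQsub : ∀ (G : Finset (Finset ℕ)), G ⊆ (Finset.Icc 1 n).powersetCard k →
      ((G.filter (fun A => n ∈ A)).image (fun A => A.erase n)) ⊆
        (Finset.Icc 1 (n-1)).powersetCard (k-1) := by
    intro G hG B hB
    obtain ⟨A, hA, rfl⟩ := mem_image.1 hB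
    rw [mem_filter] at hA
    have h0 := mem_powersetCard.1 (hG hA.1)
    rw [mem_powersetCard]
    constructor
    · intro x hx
      rw [mem_erase] at hx
      have hx1 := mem_Icc.1 (h0.1 hx.2)
      rw [mem_Icc]
      omega
    · rw [card_erase_of_mem hA.2, h0.2]
  have hQcard : ∀ (G : Finset (Finset ℕ)),
      ((G.filter (fun A => n ∈ A)).image (fun A => A.erase n)).card =
        (G.filter (fun A => n ∈ A)).card := by
    intro G
    apply Finset.card_image_of_injOn
    intro A hA B hB h
    rw [Finset.mem_coe, mem_filter] at hA hB
    rw [← insert_erase hA.2, ← insert_erase hB.2]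
    exact congrArg _ h
  have hPne : ∀ (G : Finset (Finset ℕ)), G ⊆ (Finset.Icc 1 n).powersetCard k →
      (∀ A ∈ G, n ∈ A → ∀ j, 1 ≤ j → j < n → j ∉ A → insert j (A.erase n) ∈ G) →
      G.Nonempty → (G.filter (fun A => n ∉ A)).Nonempty := by
    rintro G hG hsh ⟨A, hA⟩
    by_cases hnA : n ∈ A
    · have h0 := mem_powersetCard.1 (hG hA)
      have herase : A.erase n ⊆ Finset.Icc 1 (n-1) := by
        intro x hx
        rw [mem_erase] at hx
        have := mem_Icc.1 (h0.1 hx.2)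
        rw [mem_Icc]; omega
      have hcd : (Finset.Icc 1 (n-1) \ A.erase n).Nonempty := by
        rw [← card_pos, card_sdiff_of_subset herase, hicc', card_erase_of_mem hnA, h0.2]
        omega
      obtain ⟨j, hj⟩ := hcd
      rw [mem_sdiff] at hj
      have hj1 := mem_Icc.1 hj.1
      have hjA : j ∉ A := by
        intro hcon
        exact hj.2 (mem_erase.2 ⟨by omega, hcon⟩)
      refine ⟨insert j (A.erase n), mem_filter.2 ⟨hsh A hA hnA j (by omega) (by omega) hjA, ?_⟩⟩
      rw [mem_insert]
      push_neg
      exact ⟨by omega, fun h => (mem_erase.1 h).1 rfl⟩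
    · exact ⟨A, mem_filter.2 ⟨hA, hnA⟩⟩
  have hPne₁ := hPne G₁ hG₁ hshift1 hGne₁
  have hPne₂ := hPne G₂ hG₂ hshift2 hGne₂
  -- star bound
  have hstar : ∀ (Q : Finset (Finset ℕ)) (A₀ : Finset ℕ),
      Q ⊆ (Finset.Icc 1 (n-1)).powersetCard (k-1) → A₀ ⊆ Finset.Icc 1 (n-1) → A₀.card = k →
      (∀ B ∈ Q, (B ∩ A₀).Nonempty) →
      Q.card + (n-k-1).choose (k-1) ≤ (n-1).choose (k-1) := by
    intro Q A₀ hQ hA₀s hA₀c hmeet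
    have hdisj : Disjoint Q ((Finset.Icc 1 (n-1) \ A₀).powersetCard (k-1)) := by
      rw [disjoint_left]
      intro B hB hB'
      obtain ⟨x, hx⟩ := hmeet B hB
      rw [mem_inter] at hx
      have := (mem_powersetCard.1 hB').1 hx.1
      exact (mem_sdiff.1 this).2 hx.2
    have hsub : Q ∪ (Finset.Icc 1 (n-1) \ A₀).powersetCard (k-1) ⊆
        (Finset.Icc 1 (n-1)).powersetCard (k-1) :=
      union_subset hQ (powersetCard_mono sdiff_subset)
    have := card_le_card hsub
    rw [card_union_of_disjoint hdisj, card_powersetCard, card_powersetCard,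
      card_sdiff_of_subset hA₀s, hicc', hA₀c] at this
    have he : n - 1 - k = n - k - 1 := by omega
    rw [he] at this
    exact this
  -- the P and Q families
  have hcard1 : F₁.card = (G₁.filter (fun A => n ∉ A)).card
      + ((G₁.filter (fun A => n ∈ A)).image (fun A => A.erase n)).card := by
    rw [hQcard, ← hGc1, add_comm]
    exact (Finset.card_filter_add_card_filter_not (p := fun A => n ∈ A)).symm
  have hcard2 : F₂.card = (G₂.filter (fun A => n ∉ A)).card
      + ((G₂.filter (fun A => n ∈ A)).image (fun A => A.erase n)).card := by
    rw [hQcard, ← hGc2, add_comm]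
    exact (Finset.card_filter_add_card_filter_not (p := fun A => n ∈ A)).symm
  have hPcross : ∀ A ∈ G₁.filter (fun A => n ∉ A), ∀ B ∈ G₂.filter (fun A => n ∉ A),
      (A ∩ B).Nonempty := fun A hA B hB =>
    hGcross A (mem_filter.1 hA).1 B (mem_filter.1 hB).1
  have hP := ih (n-1) (by omega) k (G₁.filter (fun A => n ∉ A)) (G₂.filter (fun A => n ∉ A))
    hk (by omega) (hPsub G₁ hG₁) (hPsub G₂ hG₂) hPne₁ hPne₂ hPcross
  rw [show n - 1 - k = n - k - 1 from by omega] at hP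
  -- meets lemmas
  have hQ₂meets : ∀ B ∈ (G₂.filter (fun A => n ∈ A)).image (fun A => A.erase n),
      ∀ A₀ ∈ G₁.filter (fun A => n ∉ A), (B ∩ A₀).Nonempty := by
    intro B hB A₀ hA₀
    obtain ⟨A', hA', rfl⟩ := mem_image.1 hB
    rw [mem_filter] at hA' hA₀
    obtain ⟨x, hx⟩ := hGcross A₀ hA₀.1 A' hA'.1
    rw [mem_inter] at hx
    have hxn : x ≠ n := fun h => hA₀.2 (h ▸ hx.1)
    exact ⟨x, mem_inter.2 ⟨mem_erase.2 ⟨hxn, hx.2⟩, hx.1⟩⟩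
  have hQ₁meets : ∀ B ∈ (G₁.filter (fun A => n ∈ A)).image (fun A => A.erase n),
      ∀ A₀ ∈ G₂.filter (fun A => n ∉ A), (B ∩ A₀).Nonempty := by
    intro B hB A₀ hA₀
    obtain ⟨A', hA', rfl⟩ := mem_image.1 hB
    rw [mem_filter] at hA' hA₀
    obtain ⟨x, hx⟩ := hGcross A' hA'.1 A₀ hA₀.1
    rw [mem_inter] at hx
    have hxn : x ≠ n := fun h => hA₀.2 (h ▸ hx.2)
    exact ⟨x, mem_inter.2 ⟨mem_erase.2 ⟨hxn, hx.1⟩, hx.2⟩⟩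
  -- choose identities
  have eP : n.choose k = (n-1).choose (k-1) + (n-1).choose k := pascal n k (by omega) (by omega)
  have eQ : (n-k).choose k = (n-k-1).choose (k-1) + (n-k-1).choose k :=
    pascal (n-k) k (by omega) (by omega)
  -- facts about members of P₁ (used as A₀ for hstar)
  have hPmem : ∀ (G : Finset (Finset ℕ)), G ⊆ (Finset.Icc 1 n).powersetCard k →
      ∀ A₀ ∈ G.filter (fun A => n ∉ A), A₀ ⊆ Finset.Icc 1 (n-1) ∧ A₀.card = k := by
    intro G hG A₀ hA₀
    have := mem_powersetCard.1 (hPsub G hG hA₀)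
    exact this
  by_cases hq1 : (G₁.filter (fun A => n ∈ A)).image (fun A => A.erase n) = ∅
  · obtain ⟨A₀, hA₀⟩ := hPne₁
    obtain ⟨hA₀s, hA₀c⟩ := hPmem G₁ hG₁ A₀ hA₀
    have hB2 := hstar _ A₀ (hQsub G₂ hG₂) hA₀s hA₀c (fun B hB => hQ₂meets B hB A₀ hA₀)
    have hq1c : ((G₁.filter (fun A => n ∈ A)).image (fun A => A.erase n)).card = 0 := by
      rw [hq1]; rfl
    omega
  by_cases hq2 : (G₂.filter (fun A => n ∈ A)).image (fun A => A.erase n) = ∅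
  · obtain ⟨A₀, hA₀⟩ := hPne₂
    obtain ⟨hA₀s, hA₀c⟩ := hPmem G₂ hG₂ A₀ hA₀
    have hB1 := hstar _ A₀ (hQsub G₁ hG₁) hA₀s hA₀c (fun B hB => hQ₁meets B hB A₀ hA₀)
    have hq2c : ((G₂.filter (fun A => n ∈ A)).image (fun A => A.erase n)).card = 0 := by
      rw [hq2]; rfl
    omega
  -- both Q nonempty
  have hQcross : ∀ B ∈ (G₁.filter (fun A => n ∈ A)).image (fun A => A.erase n),
      ∀ B' ∈ (G₂.filter (fun A => n ∈ A)).image (fun A => A.erase n), (B ∩ B').Nonempty := by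
    intro B hB B' hB'
    obtain ⟨A, hA, rfl⟩ := mem_image.1 hB
    obtain ⟨A', hA', rfl⟩ := mem_image.1 hB'
    rw [mem_filter] at hA hA'
    have h1 := mem_powersetCard.1 (hG₁ hA.1)
    have h2 := mem_powersetCard.1 (hG₂ hA'.1)
    have herase1 : A.erase n ⊆ Finset.Icc 1 (n-1) := by
      intro x hx
      rw [mem_erase] at hx
      have := mem_Icc.1 (h1.1 hx.2)
      rw [mem_Icc]; omega
    have herase2 : A'.erase n ⊆ Finset.Icc 1 (n-1) := by
      intro x hx
      rw [mem_erase] at hx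
      have := mem_Icc.1 (h2.1 hx.2)
      rw [mem_Icc]; omega
    have hucard : (A.erase n ∪ A'.erase n).card ≤ 2*k - 2 := by
      have := card_union_le (A.erase n) (A'.erase n)
      rw [card_erase_of_mem hA.2, card_erase_of_mem hA'.2, h1.2, h2.2] at this
      omega
    have hcd : (Finset.Icc 1 (n-1) \ (A.erase n ∪ A'.erase n)).Nonempty := by
      rw [← card_pos, card_sdiff_of_subset (union_subset herase1 herase2), hicc']
      omega
    obtain ⟨j, hj⟩ := hcd
    rw [mem_sdiff, mem_union] at hj
    have hj1 := mem_Icc.1 hj.1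
    push_neg at hj
    have hjA : j ∉ A := by
      intro hcon
      exact hj.2.1 (mem_erase.2 ⟨by omega, hcon⟩)
    have hjA' : j ∉ A' := by
      intro hcon
      exact hj.2.2 (mem_erase.2 ⟨by omega, hcon⟩)
    have hins := hshift1 A hA.1 hA.2 j (by omega) (by omega) hjA
    obtain ⟨x, hx⟩ := hGcross _ hins A' hA'.1
    rw [mem_inter, mem_insert] at hx
    rcases hx with ⟨rfl | hxA, hxA'⟩
    · exact absurd hxA' hjA'
    · have hxn : x ≠ n := (mem_erase.1 hxA).1
      exact ⟨x, mem_inter.2 ⟨hxA, mem_erase.2 ⟨hxn, hxA'⟩⟩⟩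
  have hQ := ih (n-1) (by omega) (k-1)
    ((G₁.filter (fun A => n ∈ A)).image (fun A => A.erase n))
    ((G₂.filter (fun A => n ∈ A)).image (fun A => A.erase n))
    (by omega) (by omega) (hQsub G₁ hG₁) (hQsub G₂ hG₂)
    (nonempty_iff_ne_empty.2 hq1) (nonempty_iff_ne_empty.2 hq2) hQcross
  rw [show n - 1 - (k-1) = n - k from by omega] at hQ
  have e3 : (n-k).choose (k-1) = (n-k-1).choose (k-2) + (n-k-1).choose (k-1) := by
    have := pascal (n-k) (k-1) (by omega) (by omega)
    rw [show k - 1 - 1 = k - 2 from by omega] at this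
    exact this
  have e4 : 0 < (n-k-1).choose (k-2) := Nat.choose_pos (by omega)
  omega

end HMX

theorem stmt_9 (n k l : ℕ) (hk : 0 < k) (hl : 0 < l) (hn : 2 * k ≤ n)
    (F₁ F₂ : Finset (Finset ℕ))
    (hF₁ : F₁ ⊆ (Finset.Icc 1 n).powersetCard k)
    (hF₂ : F₂ ⊆ (Finset.Icc 1 n).powersetCard k)
    (hne₁ : F₁.Nonempty) (hne₂ : F₂.Nonempty)
    (hcross : ∀ A ∈ F₁, ∀ B ∈ F₂, (A ∩ B).Nonempty) :
    F₁.card + F₂.card ≤ n.choose k - (n - k).choose k + 1 := by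
  have h := HMX.main n k F₁ F₂ hk hn hF₁ hF₂ hne₁ hne₂ hcross
  have h2 : (n - k).choose k ≤ n.choose k := Nat.choose_le_choose k (by omega)
  omega
end

section
/- Let r ≥ 2 and n, k_1, ..., k_r be positive integers. Suppose F_1 ⊆ C([n],k_1), ..., F_r ⊆ C([n],k_r) are non-empty cross-intersecting families with |F_{i*}| ≥ C(n-1, k_{i*}-1) for some i* ∈ [r]. Let k̄ = min{k_i : i ∈ [r], i ≠ i*}. If n ≥ k_i + k_{i*} for every i ≠ i*, then Σ_{i=1}^{r} |F_i| ≤ max{ C(n,k_{i*}) - C(n-k̄, k_{i*}) + Σ_{i ≠ i*} C(n-k̄, k_i - k̄), Σ_{i=1}^{r} C(n-1, k_i - 1) }. -/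
open Finset Finset.Colex
open scoped FinsetFamily

namespace CrossInt



/-- `C(ν-d, γ-d) ≤ C(ν, γ)` when `γ ≤ ν`. -/
lemma choose_sub_le (d ν γ : ℕ) (h : γ ≤ ν) : (ν - d).choose (γ - d) ≤ ν.choose γ := by
  induction d with
  | zero => simp
  | succ d ih =>
    refine le_trans ?_ ih
    rcases Nat.eq_zero_or_pos (γ - d) with h0 | h0
    · have : γ - (d+1) = 0 := by omega
      simp [this, h0]
    rcases Nat.eq_zero_or_pos (ν - d) with h1 | h1
    · omega
    have hν : ν - d = (ν - (d+1)) + 1 := by omega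
    have hγ : γ - d = (γ - (d+1)) + 1 := by omega
    rw [hν, hγ, Nat.choose_succ_succ']
    exact Nat.le_add_right _ _

/-- Hockey stick. -/
lemma hockey (s N t : ℕ) (h : s ≤ N) :
    s.choose (t+1) + ∑ x ∈ Ico s N, x.choose t = N.choose (t+1) := by
  induction N with
  | zero =>
    have : s = 0 := by omega
    subst this; simp
  | succ N ih =>
    rcases Nat.lt_or_ge s (N+1) with h1 | h1
    · have hs : s ≤ N := by omega
      rw [Finset.sum_Ico_succ_top hs, ← add_assoc, ih hs, Nat.choose_succ_succ']
      omega
    · have : s = N+1 := by omega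
      subst this; simp

lemma up_step (x γ1 : ℕ) (I : Finset ℕ) (f : ℕ → ℕ) (hx : γ1 ≤ x)
    (hf : ∀ i ∈ I, f i ≤ γ1)
    (h : ∑ i ∈ I, x.choose (f i) < x.choose γ1) :
    ∑ i ∈ I, (x+1).choose (f i) < (x+1).choose γ1 := by
  have key : ∀ t, t ≤ γ1 → (x + 1 - γ1) * (x+1).choose t ≤ (x+1) * x.choose t := by
    intro t ht
    have := Nat.choose_mul_succ_eq x t
    -- x.choose t * (x + 1) = (x + 1).choose t * (x + 1 - t)
    calc (x + 1 - γ1) * (x+1).choose t ≤ (x + 1 - t) * (x+1).choose t := by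
          apply Nat.mul_le_mul_right; omega
      _ = (x+1) * x.choose t := by rw [mul_comm, ← this]; ring
  have hsum : (x + 1 - γ1) * ∑ i ∈ I, (x+1).choose (f i) ≤ (x+1) * ∑ i ∈ I, x.choose (f i) := by
    rw [Finset.mul_sum, Finset.mul_sum]
    exact Finset.sum_le_sum fun i hi => key _ (hf i hi)
  have hγ : (x + 1 - γ1) * (x+1).choose γ1 = (x+1) * x.choose γ1 := by
    have := Nat.choose_mul_succ_eq x γ1
    rw [mul_comm, ← this]; ring
  have h2 : (x+1) * (∑ i ∈ I, x.choose (f i)) + (x+1) ≤ (x+1) * x.choose γ1 := by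
    have : (∑ i ∈ I, x.choose (f i)) + 1 ≤ x.choose γ1 := h
    calc (x+1) * (∑ i ∈ I, x.choose (f i)) + (x+1)
        = (x+1) * ((∑ i ∈ I, x.choose (f i)) + 1) := by ring
      _ ≤ (x+1) * x.choose γ1 := Nat.mul_le_mul_left _ this
  have h3 : (x + 1 - γ1) * ∑ i ∈ I, (x+1).choose (f i) < (x + 1 - γ1) * (x+1).choose γ1 := by
    rw [hγ]; omega
  exact lt_of_mul_lt_mul_left h3 (Nat.zero_le _)

lemma up_chain (x y γ1 : ℕ) (I : Finset ℕ) (f : ℕ → ℕ) (hx : γ1 ≤ x) (hxy : x ≤ y)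
    (hf : ∀ i ∈ I, f i ≤ γ1)
    (h : ∑ i ∈ I, x.choose (f i) < x.choose γ1) :
    ∑ i ∈ I, y.choose (f i) < y.choose γ1 := by
  induction y with
  | zero =>
    have : x = 0 := by omega
    subst this; exact h
  | succ y ih =>
    rcases Nat.lt_or_ge x (y+1) with h1 | h1
    · have hxy' : x ≤ y := by omega
      exact up_step y γ1 I f (by omega) hf (ih hxy')
    · have : x = y + 1 := by omega
      subst this; exact h

lemma diag_step (M γd : ℕ) (I : Finset ℕ) (f : ℕ → ℕ) (hγ : 1 ≤ γd)
    (hf : ∀ i ∈ I, 1 ≤ f i ∧ f i ≤ γd)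
    (h : ∑ i ∈ I, M.choose (f i) < M.choose γd) :
    ∑ i ∈ I, (M-1).choose (f i - 1) < (M-1).choose (γd - 1) := by
  rcases Nat.eq_zero_or_pos M with hM | hM
  · subst hM
    rw [Nat.choose_eq_zero_of_lt (by omega : (0:ℕ) < γd)] at h
    omega
  -- key identity : M * C(M-1, t-1) = C(M,t) * t  for t ≥ 1
  have key : ∀ t, 1 ≤ t → M * (M-1).choose (t-1) = M.choose t * t := by
    intro t ht
    have := Nat.add_one_mul_choose_eq (M-1) (t-1)
    have hM1 : M - 1 + 1 = M := by omega
    have ht1 : t - 1 + 1 = t := by omega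
    simp only [Nat.succ_eq_add_one, hM1, ht1] at this
    exact this
  have hsum : M * ∑ i ∈ I, (M-1).choose (f i - 1) ≤ γd * ∑ i ∈ I, M.choose (f i) := by
    rw [Finset.mul_sum, Finset.mul_sum]
    refine Finset.sum_le_sum fun i hi => ?_
    rw [key _ (hf i hi).1]
    calc M.choose (f i) * f i ≤ M.choose (f i) * γd := Nat.mul_le_mul_left _ (hf i hi).2
      _ = γd * M.choose (f i) := mul_comm _ _
  have h2 : γd * (∑ i ∈ I, M.choose (f i)) + γd ≤ γd * M.choose γd := by
    calc γd * (∑ i ∈ I, M.choose (f i)) + γd = γd * ((∑ i ∈ I, M.choose (f i)) + 1) := by ring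
      _ ≤ γd * M.choose γd := Nat.mul_le_mul_left _ h
  have hγid : γd * M.choose γd = M * (M-1).choose (γd - 1) := by
    rw [key γd hγ, mul_comm]
  have h3 : M * ∑ i ∈ I, (M-1).choose (f i - 1) < M * (M-1).choose (γd-1) := by omega
  exact lt_of_mul_lt_mul_left h3 (Nat.zero_le _)


/-- The corner values. -/
def Gam (ν γ : ℕ) (I : Finset ℕ) (b : ℕ → ℕ) (d : ℕ) : ℕ :=
  (ν.choose γ - (ν-d).choose (γ-d)) + ∑ i ∈ I, (ν-d).choose (b i - d)

lemma pascal' (m t : ℕ) (hm : 1 ≤ m) (ht : 1 ≤ t) :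
    m.choose t = (m-1).choose (t-1) + (m-1).choose t := by
  rcases m with _ | m'
  · omega
  rcases t with _ | t'
  · omega
  simp [Nat.choose_succ_succ']

section GamFacts
variable {ν γ β : ℕ} {I : Finset ℕ} {b : ℕ → ℕ}

/-- Key step identity: `Gam (d+1) + Σ C(ν-d-1, b i - d) = Gam d + C(ν-d-1, γ-d)`,
valid for `1 ≤ d+1 ≤ β` range conditions. -/
lemma gam_step (hb : ∀ i ∈ I, β ≤ b i ∧ b i ≤ γ) (hγν : γ ≤ ν) (d : ℕ)
    (hd : d + 1 ≤ β) (hβγ : β ≤ γ) :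
    Gam ν γ I b (d+1) + ∑ i ∈ I, (ν-d-1).choose (b i - d) =
    Gam ν γ I b d + (ν-d-1).choose (γ-d) := by
  have hdγ : d + 1 ≤ γ := le_trans hd hβγ
  have hdν : d + 1 ≤ ν := le_trans hdγ hγν
  -- Pascal for the γ-part
  have hPγ : (ν-d).choose (γ-d) = (ν-d-1).choose (γ-d-1) + (ν-d-1).choose (γ-d) := by
    exact pascal' (ν-d) (γ-d) (by omega) (by omega)
  -- Pascal for each b-part
  have hPb : ∀ i ∈ I, (ν-d).choose (b i - d) =
      (ν-d-1).choose (b i - d - 1) + (ν-d-1).choose (b i - d) := by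
    intro i hi
    exact pascal' (ν-d) (b i - d) (by omega) (by have := (hb i hi).1; omega)
  have hle1 : (ν-d).choose (γ-d) ≤ ν.choose γ := by
    have := choose_sub_le d ν γ hγν; exact this
  have hle2 : (ν-(d+1)).choose (γ-(d+1)) ≤ ν.choose γ := by
    have := choose_sub_le (d+1) ν γ hγν; exact this
  unfold Gam
  have hsplit : ∑ i ∈ I, (ν-d).choose (b i - d) =
      (∑ i ∈ I, (ν-d-1).choose (b i - d - 1)) + ∑ i ∈ I, (ν-d-1).choose (b i - d) := by
    rw [← Finset.sum_add_distrib]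
    exact Finset.sum_congr rfl hPb
  have e1 : ∀ i ∈ I, (ν-(d+1)).choose (b i - (d+1)) = (ν-d-1).choose (b i - d - 1) := by
    intro i _; congr 1 <;> omega
  rw [Finset.sum_congr rfl e1, hsplit]
  have e2 : ν - (d+1) = ν - d - 1 := by omega
  have e3 : γ - (d+1) = γ - d - 1 := by omega
  rw [e2, e3]
  omega

/-- "Pos/Up" predicate: the increment from `Gam d` to `Gam (d+1)` is positive. -/
def Up (ν γ : ℕ) (I : Finset ℕ) (b : ℕ → ℕ) (d : ℕ) : Prop :=
  ∑ i ∈ I, (ν-d-1).choose (b i - d) < (ν-d-1).choose (γ-d)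

lemma up_propagate (hb : ∀ i ∈ I, β ≤ b i ∧ b i ≤ γ) (hβγ : β ≤ γ) (d : ℕ)
    (hd : d + 2 ≤ β) (h : Up ν γ I b d) : Up ν γ I b (d+1) := by
  unfold Up at h ⊢
  have := diag_step (ν-d-1) (γ-d) I (fun i => b i - d) (by omega)
    (fun i hi => by
      have h1 := (hb i hi).1
      have h2 := (hb i hi).2
      exact ⟨by change 1 ≤ b i - d; omega, by change b i - d ≤ γ - d; omega⟩) h
  have e1 : ∀ i ∈ I, (ν-d-1-1).choose (b i - d - 1) = (ν-(d+1)-1).choose (b i - (d+1)) := by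
    intro i _; congr 1 <;> omega
  have e2 : (ν-d-1-1).choose (γ-d-1) = (ν-(d+1)-1).choose (γ-(d+1)) := by congr 1 <;> omega
  rw [Finset.sum_congr rfl e1, e2] at this
  exact this

lemma up_chain_gam (hb : ∀ i ∈ I, β ≤ b i ∧ b i ≤ γ) (hβγ : β ≤ γ) (p q : ℕ)
    (h : Up ν γ I b p) : p ≤ q → q + 1 ≤ β → Up ν γ I b q := by
  induction q with
  | zero =>
    intro hpq _
    have hp0 : p = 0 := by omega
    subst hp0; exact h
  | succ q ih =>
    intro hpq hq
    rcases Nat.lt_or_ge p (q+1) with h1 | h1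
    · exact up_propagate hb hβγ q (by omega) (ih (by omega) (by omega))
    · have : p = q+1 := by omega
      subst this; exact h

lemma gam_lt_of_up (hb : ∀ i ∈ I, β ≤ b i ∧ b i ≤ γ) (hγν : γ ≤ ν) (hβγ : β ≤ γ) (d : ℕ)
    (hd : d + 1 ≤ β) (h : Up ν γ I b d) : Gam ν γ I b d < Gam ν γ I b (d+1) := by
  have := gam_step hb hγν d hd hβγ
  unfold Up at h
  omega

lemma gam_ge_of_not_up (hb : ∀ i ∈ I, β ≤ b i ∧ b i ≤ γ) (hγν : γ ≤ ν) (hβγ : β ≤ γ) (d : ℕ)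
    (hd : d + 1 ≤ β) (h : ¬ Up ν γ I b d) : Gam ν γ I b (d+1) ≤ Gam ν γ I b d := by
  have := gam_step hb hγν d hd hβγ
  unfold Up at h
  omega

/-- Quasiconvexity of the corner values. -/
lemma gam_le_max (hb : ∀ i ∈ I, β ≤ b i ∧ b i ≤ γ) (hγν : γ ≤ ν) (hβγ : β ≤ γ)
    (d : ℕ) (hd1 : 1 ≤ d) (hdβ : d ≤ β) :
    Gam ν γ I b d ≤ max (Gam ν γ I b 1) (Gam ν γ I b β) := by
  by_cases hex : ∃ e, 1 ≤ e ∧ e + 1 ≤ d ∧ Up ν γ I b e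
  · -- climb from d to β
    obtain ⟨e, he1, hed, hup⟩ := hex
    refine le_max_of_le_right ?_
    -- Show: ∀ q, d ≤ q → q ≤ β → Gam d ≤ Gam q, by induction
    have climb : ∀ q, d ≤ q → q ≤ β → Gam ν γ I b d ≤ Gam ν γ I b q := by
      intro q
      induction q with
      | zero =>
        intro h1 h2
        omega
      | succ q ih =>
        intro h1 h2
        rcases Nat.lt_or_ge d (q+1) with hlt | hge
        · have hq : d ≤ q := by omega
          refine le_trans (ih hq (by omega)) (le_of_lt ?_)
          exact gam_lt_of_up hb hγν hβγ q (by omega)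
            (up_chain_gam hb hβγ e q hup (by omega) (by omega))
        · have : d = q+1 := by omega
          subst this; rfl
    exact climb β hdβ le_rfl
  · -- descend from d to 1
    push_neg at hex
    refine le_max_of_le_left ?_
    have descend : ∀ q, q ≤ d → 1 ≤ q → Gam ν γ I b q ≤ Gam ν γ I b 1 := by
      intro q
      induction q with
      | zero =>
        intro h1 h2
        omega
      | succ q ih =>
        intro h1 h2
        rcases Nat.lt_or_ge 1 (q+1) with hlt | hge
        · refine le_trans ?_ (ih (by omega) (by omega))
          exact gam_ge_of_not_up hb hγν hβγ q (by omega) (hex q (by omega) (by omega))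
        · have : q = 0 := by omega
          subst this; rfl
    exact descend d le_rfl hd1
end GamFacts


section NL
variable {ν γ : ℕ} {I : Finset ℕ} {b : ℕ → ℕ}

/-- common consequence extraction for the "no" branches -/
lemma strict_top (hγ1 : 1 ≤ γ) (s : ℕ) (hs : s ≤ ν - 1) (hsγ : γ - 1 ≤ s)
    (hb : ∀ i ∈ I, 1 ≤ b i ∧ b i ≤ γ)
    (h : ∑ x ∈ Ico s (ν-1), (∑ i ∈ I, x.choose (b i - 1)) <
         ∑ x ∈ Ico s (ν-1), x.choose (γ-1)) :
    ∑ i ∈ I, (ν-1).choose (b i - 1) < (ν-1).choose (γ-1) := by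
  obtain ⟨x, hx, hlt⟩ := Finset.exists_lt_of_sum_lt h
  rw [Finset.mem_Ico] at hx
  exact up_chain x (ν-1) (γ-1) I (fun i => b i - 1) (by omega) (by omega)
    (fun i hi => by have := (hb i hi).2; change b i - 1 ≤ γ - 1; omega) hlt

lemma hockey_diff (hγν : γ ≤ ν - 1) (t : ℕ) (s : ℕ) (hst : s ≤ ν - 1) :
    (ν-1).choose (t+1) - s.choose (t+1) = ∑ x ∈ Ico s (ν-1), x.choose t := by
  have := hockey s (ν-1) t hst
  omega

lemma NL1 (hν : 1 ≤ ν) (hγ1 : 1 ≤ γ) (hγν : γ ≤ ν - 1)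
    (hb : ∀ i ∈ I, 1 ≤ b i ∧ b i ≤ γ) :
    (ν-1).choose γ + ∑ i ∈ I, (ν-1).choose (b i - 1) ≤
      max (1 + ∑ i ∈ I, (ν.choose (b i) - γ.choose (b i))) (ν.choose γ) := by
  by_cases hc : (ν-1).choose γ ≤ 1 + ∑ i ∈ I, ((ν-1).choose (b i) - γ.choose (b i))
  · refine le_max_of_le_left ?_
    have key : ∀ i ∈ I, ((ν-1).choose (b i) - γ.choose (b i)) + (ν-1).choose (b i - 1)
        = ν.choose (b i) - γ.choose (b i) := by
      intro i hi
      have h1 := (hb i hi).1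
      have h2 := (hb i hi).2
      have hp := pascal' ν (b i) (by omega) h1
      have hle : γ.choose (b i) ≤ (ν-1).choose (b i) := Nat.choose_le_choose _ (by omega)
      omega
    calc (ν-1).choose γ + ∑ i ∈ I, (ν-1).choose (b i - 1)
        ≤ 1 + ∑ i ∈ I, ((ν-1).choose (b i) - γ.choose (b i))
            + ∑ i ∈ I, (ν-1).choose (b i - 1) := by omega
      _ = 1 + ∑ i ∈ I, (((ν-1).choose (b i) - γ.choose (b i)) + (ν-1).choose (b i - 1)) := by
            rw [Finset.sum_add_distrib]; omega
      _ = 1 + ∑ i ∈ I, (ν.choose (b i) - γ.choose (b i)) := by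
            rw [Finset.sum_congr rfl key]
  · refine le_max_of_le_right ?_
    push_neg at hc
    -- rewrite via hockey sums
    have hrw : ∀ i ∈ I, (ν-1).choose (b i) - γ.choose (b i)
        = ∑ x ∈ Ico γ (ν-1), x.choose (b i - 1) := by
      intro i hi
      have h1 := (hb i hi).1
      have := hockey_diff hγν (b i - 1) γ hγν
      rw [show b i - 1 + 1 = b i by omega] at this
      exact this
    have hrwγ : (ν-1).choose γ = 1 + ∑ x ∈ Ico γ (ν-1), x.choose (γ-1) := by
      have := hockey γ (ν-1) (γ-1) hγν
      rw [show γ - 1 + 1 = γ by omega] at this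
      rw [Nat.choose_self] at this
      omega
    have hlt : ∑ x ∈ Ico γ (ν-1), (∑ i ∈ I, x.choose (b i - 1)) <
        ∑ x ∈ Ico γ (ν-1), x.choose (γ-1) := by
      rw [Finset.sum_comm]
      have : ∑ i ∈ I, ∑ x ∈ Ico γ (ν-1), x.choose (b i - 1)
          = ∑ i ∈ I, ((ν-1).choose (b i) - γ.choose (b i)) := by
        refine Finset.sum_congr rfl fun i hi => (hrw i hi).symm
      omega
    have hstrict := strict_top hγ1 γ hγν (by omega) hb hlt
    have hp := pascal' ν γ (by omega) hγ1
    omega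

lemma NL2 (hν : 1 ≤ ν) (hγ1 : 1 ≤ γ) (hγν : γ ≤ ν - 1)
    (hb : ∀ i ∈ I, 1 ≤ b i ∧ b i ≤ γ) :
    (ν-1).choose γ + (1 + ∑ i ∈ I.filter (fun i => 2 ≤ b i),
        ((ν-1).choose (b i - 1) - (γ-1).choose (b i - 1))) ≤
      max (1 + ∑ i ∈ I, (ν.choose (b i) - γ.choose (b i))) (ν.choose γ) := by
  by_cases hc : (ν-1).choose γ ≤ ∑ i ∈ I, ((ν-1).choose (b i) - (γ-1).choose (b i))
  · refine le_max_of_le_left ?_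
    have hsplit : ∀ i ∈ I, ν.choose (b i) - γ.choose (b i)
        = ((ν-1).choose (b i) - (γ-1).choose (b i))
          + ((ν-1).choose (b i - 1) - (γ-1).choose (b i - 1)) := by
      intro i hi
      have h1 := (hb i hi).1
      have h2 := (hb i hi).2
      have hpν := pascal' ν (b i) (by omega) h1
      have hpγ := pascal' γ (b i) (by omega) h1
      have hle1 : (γ-1).choose (b i) ≤ (ν-1).choose (b i) := Nat.choose_le_choose _ (by omega)
      have hle2 : (γ-1).choose (b i - 1) ≤ (ν-1).choose (b i - 1) :=
        Nat.choose_le_choose _ (by omega)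
      omega
    have hzero : ∀ i ∈ I, i ∉ I.filter (fun i => 2 ≤ b i) →
        ((ν-1).choose (b i - 1) - (γ-1).choose (b i - 1)) = 0 := by
      intro i hi hni
      rw [Finset.mem_filter] at hni
      have h1 := (hb i hi).1
      have : b i = 1 := by
        rcases Nat.lt_or_ge (b i) 2 with h | h
        · omega
        · exact absurd ⟨hi, h⟩ hni
      rw [this]
      simp
    have hsum2 : ∑ i ∈ I.filter (fun i => 2 ≤ b i),
        ((ν-1).choose (b i - 1) - (γ-1).choose (b i - 1))
        = ∑ i ∈ I, ((ν-1).choose (b i - 1) - (γ-1).choose (b i - 1)) := by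
      refine Finset.sum_subset (Finset.filter_subset _ _) ?_
      intro i hi hni
      exact hzero i hi hni
    rw [hsum2]
    have : ∑ i ∈ I, (ν.choose (b i) - γ.choose (b i))
        = ∑ i ∈ I, ((ν-1).choose (b i) - (γ-1).choose (b i))
          + ∑ i ∈ I, ((ν-1).choose (b i - 1) - (γ-1).choose (b i - 1)) := by
      rw [← Finset.sum_add_distrib]
      exact Finset.sum_congr rfl hsplit
    omega
  · refine le_max_of_le_right ?_
    push_neg at hc
    have hrw : ∀ i ∈ I, (ν-1).choose (b i) - (γ-1).choose (b i)
        = ∑ x ∈ Ico (γ-1) (ν-1), x.choose (b i - 1) := by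
      intro i hi
      have h1 := (hb i hi).1
      have := hockey_diff hγν (b i - 1) (γ-1) (by omega)
      rw [show b i - 1 + 1 = b i by omega] at this
      exact this
    have hrwγ : (ν-1).choose γ = ∑ x ∈ Ico (γ-1) (ν-1), x.choose (γ-1) := by
      have := hockey (γ-1) (ν-1) (γ-1) (by omega)
      rw [show γ - 1 + 1 = γ by omega] at this
      rw [Nat.choose_eq_zero_of_lt (by omega : γ - 1 < γ)] at this
      omega
    have hlt : ∑ x ∈ Ico (γ-1) (ν-1), (∑ i ∈ I, x.choose (b i - 1)) <
        ∑ x ∈ Ico (γ-1) (ν-1), x.choose (γ-1) := by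
      rw [Finset.sum_comm]
      have : ∑ i ∈ I, ∑ x ∈ Ico (γ-1) (ν-1), x.choose (b i - 1)
          = ∑ i ∈ I, ((ν-1).choose (b i) - (γ-1).choose (b i)) := by
        refine Finset.sum_congr rfl fun i hi => (hrw i hi).symm
      omega
    have hstrict := strict_top hγ1 (γ-1) (by omega) (by omega) hb hlt
    have hp := pascal' ν γ (by omega) hγ1
    have hmono : ∑ i ∈ I.filter (fun i => 2 ≤ b i),
        ((ν-1).choose (b i - 1) - (γ-1).choose (b i - 1))
        ≤ ∑ i ∈ I, (ν-1).choose (b i - 1) := by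
      calc ∑ i ∈ I.filter (fun i => 2 ≤ b i),
          ((ν-1).choose (b i - 1) - (γ-1).choose (b i - 1))
          ≤ ∑ i ∈ I.filter (fun i => 2 ≤ b i), (ν-1).choose (b i - 1) :=
            Finset.sum_le_sum fun i _ => Nat.sub_le _ _
        _ ≤ ∑ i ∈ I, (ν-1).choose (b i - 1) :=
            Finset.sum_le_sum_of_subset (Finset.filter_subset _ _)
    omega
end NL



/-- level family: all γ-subsets of {1,…,ν} -/
def lvl (ν γ : ℕ) : Finset (Finset ℕ) := (Finset.Icc 1 ν).powersetCard γ

lemma mem_lvl {ν γ : ℕ} {B : Finset ℕ} : B ∈ lvl ν γ ↔ B ⊆ Finset.Icc 1 ν ∧ B.card = γ := by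
  simp [lvl, Finset.mem_powersetCard]

lemma card_lvl (ν γ : ℕ) : (lvl ν γ).card = ν.choose γ := by
  simp [lvl, Finset.card_powersetCard, Nat.card_Icc]

/-- Initial segment of colex within level (ν, γ) -/
def IsSeg (ν γ : ℕ) (J : Finset (Finset ℕ)) : Prop :=
  J ⊆ lvl ν γ ∧ ∀ A ∈ J, ∀ B ∈ lvl ν γ, toColex B ≤ toColex A → B ∈ J

lemma lvl_mono {ν γ : ℕ} : lvl (ν-1) γ ⊆ lvl ν γ := by
  intro B hB
  rw [mem_lvl] at hB ⊢
  exact ⟨hB.1.trans (Finset.Icc_subset_Icc_right (by omega)), hB.2⟩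

lemma colex_lt_of_top {A B : Finset ℕ} {ν : ℕ} (hν : ν ∈ A)
    (hB : ∀ x ∈ B, x < ν) : toColex B < toColex A := by
  rw [toColex_lt_toColex_iff_exists_forall_lt]
  refine ⟨ν, hν, fun h => by have := hB _ h; omega, fun x hx _ => hB _ hx⟩

lemma subset_lower_of_mem {ν γ : ℕ} {B : Finset ℕ} (hB : B ∈ lvl ν γ) (hν : ν ∉ B) :
    B ∈ lvl (ν-1) γ := by
  rw [mem_lvl] at hB ⊢
  refine ⟨fun x hx => ?_, hB.2⟩
  have := hB.1 hx
  rw [Finset.mem_Icc] at this ⊢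
  have : x ≠ ν := fun h => hν (h ▸ hx)
  omega

lemma mem_lower_lt {ν : ℕ} {γ : ℕ} {B : Finset ℕ} (hB : B ∈ lvl (ν-1) γ) (hν : 1 ≤ ν) :
    ∀ x ∈ B, x < ν := by
  intro x hx
  rw [mem_lvl] at hB
  have := hB.1 hx
  rw [Finset.mem_Icc] at this
  omega

/-- If some member of an initial segment contains ν, the whole lower level is inside. -/
lemma lower_subset_of_top {ν γ : ℕ} {J : Finset (Finset ℕ)} (hJ : IsSeg ν γ J)
    {A : Finset ℕ} (hA : A ∈ J) (hν : ν ∈ A) (h1 : 1 ≤ ν) : lvl (ν-1) γ ⊆ J := by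
  intro B hB
  exact hJ.2 A hA B (lvl_mono hB) (le_of_lt (colex_lt_of_top hν (mem_lower_lt hB h1)))

/-- If no member contains ν, the initial segment is inside the lower level. -/
lemma seg_subset_lower {ν γ : ℕ} {J : Finset (Finset ℕ)} (hJ : IsSeg ν γ J)
    (h : ∀ A ∈ J, ν ∉ A) : J ⊆ lvl (ν-1) γ :=
  fun A hA => subset_lower_of_mem (hJ.1 hA) (h A hA)

lemma seg_lower {ν γ : ℕ} {J : Finset (Finset ℕ)} (hJ : IsSeg ν γ J)
    (h : J ⊆ lvl (ν-1) γ) : IsSeg (ν-1) γ J := by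
  refine ⟨h, fun A hA B hB hle => hJ.2 A hA B (lvl_mono hB) hle⟩

/-- the peeled family -/
def peel (ν : ℕ) (J : Finset (Finset ℕ)) : Finset (Finset ℕ) :=
  (J.filter (fun A => ν ∈ A)).image (fun A => A.erase ν)

lemma mem_peel {ν : ℕ} {J : Finset (Finset ℕ)} {B : Finset ℕ} :
    B ∈ peel ν J ↔ ν ∉ B ∧ insert ν B ∈ J := by
  unfold peel
  simp only [Finset.mem_image, Finset.mem_filter]
  constructor
  · rintro ⟨A, ⟨hA, hν⟩, rfl⟩
    refine ⟨Finset.notMem_erase _ _, ?_⟩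
    rwa [Finset.insert_erase hν]
  · rintro ⟨hν, hmem⟩
    exact ⟨insert ν B, ⟨hmem, Finset.mem_insert_self _ _⟩, by rw [Finset.erase_insert hν]⟩

lemma card_peel {ν : ℕ} {J : Finset (Finset ℕ)} :
    (peel ν J).card = (J.filter (fun A => ν ∈ A)).card := by
  unfold peel
  apply Finset.card_image_of_injOn
  intro A hA B hB hAB
  rw [Finset.mem_coe, Finset.mem_filter] at hA hB
  simp only at hAB
  rw [← Finset.insert_erase hA.2, ← Finset.insert_erase hB.2, hAB]

lemma card_split {ν γ : ℕ} {J : Finset (Finset ℕ)} (hJ : IsSeg ν γ J)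
    (hlow : lvl (ν-1) γ ⊆ J) (h1 : 1 ≤ ν) (hγν : γ ≤ ν - 1) :
    J.card = (ν-1).choose γ + (peel ν J).card := by
  rw [card_peel]
  have hsplit := Finset.card_filter_add_card_filter_not
    (s := J) (p := fun A => ν ∈ A)
  have : J.filter (fun A => ν ∉ A) = lvl (ν-1) γ := by
    apply Finset.Subset.antisymm
    · intro A hA
      rw [Finset.mem_filter] at hA
      exact subset_lower_of_mem (hJ.1 hA.1) hA.2
    · intro B hB
      rw [Finset.mem_filter]
      refine ⟨hlow hB, fun hν => ?_⟩
      have := mem_lower_lt hB h1 ν hν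
      omega
  rw [← card_lvl (ν-1) γ, ← this]
  omega

lemma peel_seg {ν γ : ℕ} {J : Finset (Finset ℕ)} (hJ : IsSeg ν γ J) (h1 : 1 ≤ ν)
    (hγ1 : 1 ≤ γ) : IsSeg (ν-1) (γ-1) (peel ν J) := by
  constructor
  · intro B hB
    rw [mem_peel] at hB
    have hmem := hJ.1 hB.2
    rw [mem_lvl] at hmem ⊢
    constructor
    · intro x hx
      have hxi : x ∈ insert ν B := Finset.mem_insert_of_mem hx
      have := hmem.1 hxi
      rw [Finset.mem_Icc] at this ⊢
      have : x ≠ ν := fun h => hB.1 (h ▸ hx)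
      omega
    · have := hmem.2
      rw [Finset.card_insert_of_notMem hB.1] at this
      omega
  · intro A hA B hB hle
    rw [mem_peel] at hA ⊢
    have hBν : ν ∉ B := by
      intro hν
      have := (mem_lvl.1 hB).1 hν
      rw [Finset.mem_Icc] at this
      omega
    refine ⟨hBν, ?_⟩
    have hile : toColex (insert ν B) ≤ toColex (insert ν A) := by
      have hs : ({ν} : Finset ℕ) ⊆ insert ν B := by simp
      have ht : ({ν} : Finset ℕ) ⊆ insert ν A := by simp
      rw [← toColex_sdiff_le_toColex_sdiff hs ht]
      have e1 : insert ν B \ {ν} = B := by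
        rw [Finset.sdiff_singleton_eq_erase, Finset.erase_insert hBν]
      have e2 : insert ν A \ {ν} = A := by
        rw [Finset.sdiff_singleton_eq_erase, Finset.erase_insert hA.1]
      rw [e1, e2]
      exact hle
    have hiB : insert ν B ∈ lvl ν γ := by
      rw [mem_lvl]
      have hmem := mem_lvl.1 hB
      constructor
      · intro x hx
        rcases Finset.mem_insert.1 hx with rfl | hx
        · rw [Finset.mem_Icc]; omega
        · exact (Finset.Icc_subset_Icc_right (by omega)) (hmem.1 hx)
      · rw [Finset.card_insert_of_notMem hBν, hmem.2]
        omega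
    exact hJ.2 _ hA.2 _ hiB hile

lemma peel_nonempty {ν γ : ℕ} {J : Finset (Finset ℕ)} {A : Finset ℕ}
    (hA : A ∈ J) (hν : ν ∈ A) : (peel ν J).Nonempty := by
  refine ⟨A.erase ν, ?_⟩
  rw [mem_peel]
  refine ⟨Finset.notMem_erase _ _, by rwa [Finset.insert_erase hν]⟩


lemma shadow_iterate_subset_lvl {ν γ j : ℕ} {C : Finset (Finset ℕ)} (hC : C ⊆ lvl ν γ) :
    ∂^[j] C ⊆ lvl ν (γ - j) := by
  intro B hB
  rw [Finset.mem_shadow_iterate_iff_exists_sdiff] at hB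
  obtain ⟨s, hs, hBs, hcard⟩ := hB
  have hsl := mem_lvl.1 (hC hs)
  rw [mem_lvl]
  refine ⟨hBs.trans hsl.1, ?_⟩
  have := Finset.card_sdiff_of_subset hBs
  have hle := Finset.card_le_card hBs
  omega

lemma lower_subset_shadow {ν γ b : ℕ} {J : Finset (Finset ℕ)}
    (hlow : lvl (ν-1) γ ⊆ J) (hγν : γ ≤ ν - 1) (hb : b ≤ γ) :
    lvl (ν-1) b ⊆ ∂^[γ - b] J := by
  intro B hB
  rw [Finset.mem_shadow_iterate_iff_exists_sdiff]
  have hBl := mem_lvl.1 hB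
  obtain ⟨C, hBC, hCic, hCcard⟩ := Finset.exists_subsuperset_card_eq (n := γ) hBl.1
    (by rw [hBl.2]; exact hb) (by rw [Nat.card_Icc]; omega)
  refine ⟨C, hlow (mem_lvl.2 ⟨hCic, hCcard⟩), hBC, ?_⟩
  rw [Finset.card_sdiff_of_subset hBC, hCcard, hBl.2]

lemma lift_subset_shadow {ν j : ℕ} {J : Finset (Finset ℕ)} :
    (∂^[j] (peel ν J)).image (insert ν) ⊆ ∂^[j] J := by
  intro B hB
  rw [Finset.mem_image] at hB
  obtain ⟨B', hB', rfl⟩ := hB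
  rw [Finset.mem_shadow_iterate_iff_exists_sdiff] at hB' ⊢
  obtain ⟨A', hA', hBA, hcard⟩ := hB'
  rw [mem_peel] at hA'
  refine ⟨insert ν A', hA'.2, Finset.insert_subset_insert _ hBA, ?_⟩
  have : insert ν A' \ insert ν B' = A' \ B' := by
    ext x
    simp only [Finset.mem_sdiff, Finset.mem_insert]
    constructor
    · rintro ⟨(rfl | hx), hn⟩
      · exact absurd (Or.inl rfl) hn
      · exact ⟨hx, fun h => hn (Or.inr h)⟩
    · rintro ⟨hx, hn⟩
      have hxν : x ≠ ν := fun h => hA'.1 (h ▸ hx)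
      exact ⟨Or.inr hx, fun h => h.elim (fun h => hxν h) hn⟩
  rw [this, hcard]

lemma shadow_card_split {ν γ b : ℕ} {J : Finset (Finset ℕ)}
    (hJ : IsSeg ν γ J) (hlow : lvl (ν-1) γ ⊆ J) (h1 : 1 ≤ ν) (hγν : γ ≤ ν - 1)
    (hb1 : 1 ≤ b) (hbγ : b ≤ γ) :
    (ν-1).choose b + (∂^[γ - b] (peel ν J)).card ≤ (∂^[γ - b] J).card := by
  have hsub1 := lower_subset_shadow (ν := ν) (γ := γ) (b := b) hlow hγν hbγ
  have hsub2 := lift_subset_shadow (ν := ν) (j := γ - b) (J := J)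
  -- peel members don't contain ν
  have hpeel_no : ∀ B' ∈ ∂^[γ-b] (peel ν J), ν ∉ B' := by
    intro B' hB'
    rw [Finset.mem_shadow_iterate_iff_exists_sdiff] at hB'
    obtain ⟨A', hA', hBA, _⟩ := hB'
    rw [mem_peel] at hA'
    exact fun h => hA'.1 (hBA h)
  have hinj : Set.InjOn (insert ν) ((∂^[γ-b] (peel ν J) : Finset (Finset ℕ)) : Set (Finset ℕ)) := by
    intro A hA B hB hAB
    have hAn := hpeel_no A hA
    have hBn := hpeel_no B hB
    rw [← Finset.erase_insert hAn, ← Finset.erase_insert hBn, hAB]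
  have hcard2 : ((∂^[γ - b] (peel ν J)).image (insert ν)).card
      = (∂^[γ - b] (peel ν J)).card := Finset.card_image_of_injOn hinj
  have hdisj : Disjoint (lvl (ν-1) b) ((∂^[γ - b] (peel ν J)).image (insert ν)) := by
    rw [Finset.disjoint_left]
    intro B hB1 hB2
    rw [Finset.mem_image] at hB2
    obtain ⟨B', _, rfl⟩ := hB2
    have := mem_lower_lt hB1 h1 ν (Finset.mem_insert_self _ _)
    omega
  calc (ν-1).choose b + (∂^[γ - b] (peel ν J)).card
      = (lvl (ν-1) b).card + ((∂^[γ - b] (peel ν J)).image (insert ν)).card := by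
        rw [card_lvl, hcard2]
    _ = ((lvl (ν-1) b) ∪ (∂^[γ - b] (peel ν J)).image (insert ν)).card := by
        rw [Finset.card_union_of_disjoint hdisj]
    _ ≤ (∂^[γ - b] J).card := Finset.card_le_card (Finset.union_subset hsub1 hsub2)

lemma shadow_iterate_nonempty {j : ℕ} {F : Finset (Finset ℕ)} {A : Finset ℕ}
    (hA : A ∈ F) (hj : j ≤ A.card) : (∂^[j] F).Nonempty := by
  obtain ⟨B, hBA, hcard⟩ := Finset.exists_subset_card_eq (show A.card - j ≤ A.card by omega)
  refine ⟨B, ?_⟩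
  rw [Finset.mem_shadow_iterate_iff_exists_sdiff]
  exact ⟨A, hA, hBA, by rw [Finset.card_sdiff_of_subset hBA, hcard]; omega⟩

lemma shadow_full_level {ν b : ℕ} (hb : b ≤ ν) :
    ∂^[ν - b] (lvl ν ν) = lvl ν b := by
  ext B
  rw [Finset.mem_shadow_iterate_iff_exists_sdiff]
  constructor
  · rintro ⟨s, hs, hBs, hcard⟩
    have hsl := mem_lvl.1 hs
    rw [mem_lvl]
    have := Finset.card_sdiff_of_subset hBs
    have hle := Finset.card_le_card hBs
    refine ⟨hBs.trans hsl.1, by omega⟩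
  · intro hB
    have hBl := mem_lvl.1 hB
    refine ⟨Finset.Icc 1 ν, ?_, hBl.1, ?_⟩
    · rw [mem_lvl]
      exact ⟨Finset.Subset.refl _, by rw [Nat.card_Icc]; omega⟩
    · rw [Finset.card_sdiff_of_subset hBl.1, Nat.card_Icc, hBl.2]
      omega

lemma lvl_self_singleton (ν : ℕ) : lvl ν ν = {Finset.Icc 1 ν} := by
  ext A
  rw [mem_lvl, Finset.mem_singleton]
  constructor
  · rintro ⟨hsub, hcard⟩
    apply Finset.eq_of_subset_of_card_le hsub
    rw [Nat.card_Icc, hcard]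
    omega
  · rintro rfl
    exact ⟨Finset.Subset.refl _, by rw [Nat.card_Icc]; omega⟩


lemma card_fin_filter_lt (N e : ℕ) (he : e ≤ N) :
    ((Finset.univ : Finset (Fin N)).filter (fun i => i.val < e)).card = e := by
  rcases Nat.lt_or_ge e N with h | h
  · have : (Finset.univ : Finset (Fin N)).filter (fun i => i.val < e)
        = Finset.Iio (⟨e, h⟩ : Fin N) := by
      ext i
      simp [Finset.mem_Iio, Fin.lt_def]
    rw [this, Fin.card_Iio]
  · have heN : e = N := by omega
    subst heN
    have huniv : (Finset.univ : Finset (Fin e)).filter (fun i => i.val < e)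
        = (Finset.univ : Finset (Fin e)) := by
      ext i
      simp [i.isLt]
    rw [huniv, Finset.card_univ, Fintype.card_fin]

/-- There is an initial segment of any admissible size. -/
lemma exists_seg (ν γ e : ℕ) (he : e ≤ ν.choose γ) :
    ∃ J : Finset (Finset ℕ), IsSeg ν γ J ∧ J.card = e := by
  classical
  set L : Finset (Colex (Finset ℕ)) := (lvl ν γ).image toColex with hL
  have hLcard : L.card = ν.choose γ := by
    rw [hL, Finset.card_image_of_injective _ toColex.injective, card_lvl]
  set f := L.orderEmbOfFin hLcard with hf
  set J : Finset (Finset ℕ) :=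
    ((Finset.univ : Finset (Fin (ν.choose γ))).filter (fun i => i.val < e)).image
      (fun i => ofColex (f i)) with hJ
  have hmemf : ∀ i, ofColex (f i) ∈ lvl ν γ := by
    intro i
    have : f i ∈ L := Finset.orderEmbOfFin_mem L hLcard i
    rw [hL, Finset.mem_image] at this
    obtain ⟨B, hB, hBe⟩ := this
    rwa [← hBe]
  have hJsub : J ⊆ lvl ν γ := by
    intro A hA
    rw [hJ, Finset.mem_image] at hA
    obtain ⟨i, _, rfl⟩ := hA
    exact hmemf i
  refine ⟨J, ⟨hJsub, ?_⟩, ?_⟩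
  · intro A hA B hB hle
    rw [hJ, Finset.mem_image] at hA
    obtain ⟨i, hi, rfl⟩ := hA
    rw [Finset.mem_filter] at hi
    have hBL : toColex B ∈ L := by
      rw [hL, Finset.mem_image]
      exact ⟨B, hB, rfl⟩
    have : toColex B ∈ Set.range f := by
      rw [hf, Finset.range_orderEmbOfFin]
      exact hBL
    obtain ⟨j, hj⟩ := this
    have hji : j ≤ i := by
      rw [← f.le_iff_le, hj]
      simpa using hle
    rw [hJ, Finset.mem_image]
    refine ⟨j, ?_, by rw [hj]; rfl⟩
    rw [Finset.mem_filter]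
    have hval : (j : ℕ) ≤ (i : ℕ) := hji
    have := hi.2
    exact ⟨Finset.mem_univ _, by omega⟩
  · rw [hJ, Finset.card_image_of_injective _ ?inj, card_fin_filter_lt _ _ he]
    case inj =>
      intro x y hxy
      exact f.injective (ofColex_inj.1 hxy)

section ShadowImage
variable {α β : Type*} [DecidableEq α] [DecidableEq β]

lemma shadow_image {g : α → β} (hg : Function.Injective g) (𝒜 : Finset (Finset α)) :
    ∂ (𝒜.image (fun s => s.image g)) = (∂ 𝒜).image (fun s => s.image g) := by
  ext t
  rw [Finset.mem_shadow_iff_exists_sdiff, Finset.mem_image]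
  constructor
  · rintro ⟨s', hs', hts, hcard⟩
    rw [Finset.mem_image] at hs'
    obtain ⟨s, hs, rfl⟩ := hs'
    set t₀ := s.filter (fun a => g a ∈ t) with ht₀
    have himg : t₀.image g = t := by
      apply Finset.Subset.antisymm
      · intro x hx
        rw [Finset.mem_image] at hx
        obtain ⟨a, ha, rfl⟩ := hx
        rw [ht₀, Finset.mem_filter] at ha
        exact ha.2
      · intro x hx
        have := hts hx
        rw [Finset.mem_image] at this
        obtain ⟨a, ha, rfl⟩ := this
        rw [Finset.mem_image]
        exact ⟨a, by rw [ht₀, Finset.mem_filter]; exact ⟨ha, hx⟩, rfl⟩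
    have ht₀s : t₀ ⊆ s := Finset.filter_subset _ _
    refine ⟨t₀, ?_, himg⟩
    rw [Finset.mem_shadow_iff_exists_sdiff]
    refine ⟨s, hs, ht₀s, ?_⟩
    have : s.image g \ t = (s \ t₀).image g := by
      rw [← himg, ← Finset.image_sdiff _ _ hg]
    rw [this, Finset.card_image_of_injective _ hg] at hcard
    exact hcard
  · rintro ⟨t₀, ht₀, rfl⟩
    rw [Finset.mem_shadow_iff_exists_sdiff] at ht₀
    obtain ⟨s, hs, hts, hcard⟩ := ht₀
    refine ⟨s.image g, Finset.mem_image_of_mem _ hs, Finset.image_subset_image hts, ?_⟩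
    rw [← Finset.image_sdiff _ _ hg, Finset.card_image_of_injective _ hg]
    exact hcard

lemma shadow_iterate_image {g : α → β} (hg : Function.Injective g) (𝒜 : Finset (Finset α))
    (j : ℕ) :
    ∂^[j] (𝒜.image (fun s => s.image g)) = (∂^[j] 𝒜).image (fun s => s.image g) := by
  induction j with
  | zero => simp
  | succ j ih =>
    rw [Function.iterate_succ_apply', Function.iterate_succ_apply', ih, shadow_image hg]
end ShadowImage

section Transfer
variable {n : ℕ}

def upf (n : ℕ) : Fin n → ℕ := fun i => i.val + 1

lemma upf_strictMono : StrictMono (upf n) := fun i j hij => by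
  simp only [upf]
  exact Nat.add_lt_add_right hij 1

lemma upf_injective : Function.Injective (upf n) := upf_strictMono.injective

def upF (n : ℕ) (s : Finset (Fin n)) : Finset ℕ := s.image (upf n)

def downF (n : ℕ) (s : Finset ℕ) : Finset (Fin n) :=
  Finset.univ.filter (fun i => (i.val + 1) ∈ s)

lemma up_down {s : Finset ℕ} (hs : s ⊆ Finset.Icc 1 n) : upF n (downF n s) = s := by
  ext x
  unfold upF downF upf
  simp only [Finset.mem_image, Finset.mem_filter, Finset.mem_univ, true_and]
  constructor
  · rintro ⟨i, hi, rfl⟩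
    exact hi
  · intro hx
    have := hs hx
    rw [Finset.mem_Icc] at this
    exact ⟨⟨x - 1, by omega⟩, by simpa using (by omega : x - 1 + 1 = x) ▸ hx, by simp; omega⟩

lemma down_up (s : Finset (Fin n)) : downF n (upF n s) = s := by
  ext i
  unfold upF downF upf
  simp only [Finset.mem_filter, Finset.mem_univ, true_and, Finset.mem_image]
  constructor
  · rintro ⟨i', hi', he⟩
    have : i' = i := by
      have : i'.val = i.val := by omega
      exact Fin.ext this
    rwa [← this]
  · intro hi
    exact ⟨i, hi, rfl⟩

lemma card_up (s : Finset (Fin n)) : (upF n s).card = s.card :=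
  Finset.card_image_of_injective _ upf_injective

lemma kk_nat (γ : ℕ) (C J : Finset (Finset ℕ)) (hC : C ⊆ lvl n γ) (hJ : IsSeg n γ J)
    (hcard : J.card ≤ C.card) (j : ℕ) : (∂^[j] J).card ≤ (∂^[j] C).card := by
  classical
  set Js : Finset (Finset (Fin n)) := J.image (downF n) with hJs
  set Cs : Finset (Finset (Fin n)) := C.image (downF n) with hCs
  have hupJ : Js.image (fun s => s.image (upf n)) = J := by
    rw [hJs, Finset.image_image]
    have : ∀ s ∈ J, (downF n s).image (upf n) = s := by
      intro s hs
      exact up_down (mem_lvl.1 (hJ.1 hs)).1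
    calc J.image (fun s => (downF n s).image (upf n)) = J.image id := Finset.image_congr
          (fun s hs => by simp only [id]; exact this s hs)
      _ = J := Finset.image_id
  have hupC : Cs.image (fun s => s.image (upf n)) = C := by
    rw [hCs, Finset.image_image]
    have : ∀ s ∈ C, (downF n s).image (upf n) = s := by
      intro s hs
      exact up_down (mem_lvl.1 (hC hs)).1
    calc C.image (fun s => (downF n s).image (upf n)) = C.image id := Finset.image_congr
          (fun s hs => by simp only [id]; exact this s hs)
      _ = C := Finset.image_id
  -- sizes
  have hsizedC : (Cs : Set (Finset (Fin n))).Sized γ := by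
    intro s hs
    rw [hCs, Finset.mem_coe, Finset.mem_image] at hs
    obtain ⟨s₀, hs₀, rfl⟩ := hs
    have h₀ := mem_lvl.1 (hC hs₀)
    have : (downF n s₀).image (upf n) = s₀ := up_down h₀.1
    have hc : ((downF n s₀).image (upf n)).card = s₀.card := by rw [this]
    rw [Finset.card_image_of_injective _ upf_injective] at hc
    rw [hc, h₀.2]
  have himg_inj : Function.Injective (fun s : Finset (Fin n) => s.image (upf n)) := by
    intro a b hab
    have h2 : downF n (upF n a) = downF n (upF n b) := by
      unfold upF
      simp only at hab
      rw [hab]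
    rwa [down_up, down_up] at h2
  have hcards : Js.card = J.card := by
    have := Finset.card_image_of_injective Js himg_inj
    rw [hupJ] at this
    omega
  have hcardsC : Cs.card = C.card := by
    have := Finset.card_image_of_injective Cs himg_inj
    rw [hupC] at this
    omega
  -- initial segment on the Fin side
  have hinit : Colex.IsInitSeg Js γ := by
    constructor
    · intro s hs
      rw [hJs, Finset.mem_coe, Finset.mem_image] at hs
      obtain ⟨s₀, hs₀, rfl⟩ := hs
      have h₀ := mem_lvl.1 (hJ.1 hs₀)
      have : (downF n s₀).image (upf n) = s₀ := up_down h₀.1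
      have hc : ((downF n s₀).image (upf n)).card = s₀.card := by rw [this]
      rw [Finset.card_image_of_injective _ upf_injective] at hc
      rw [hc, h₀.2]
    · rintro A B hA ⟨hBlt, hBcard⟩
      rw [hJs, Finset.mem_image] at hA
      obtain ⟨A₀, hA₀, rfl⟩ := hA
      have hA₀l := mem_lvl.1 (hJ.1 hA₀)
      have hupA : (downF n A₀).image (upf n) = A₀ := up_down hA₀l.1
      have hBl : B.image (upf n) ∈ lvl n γ := by
        rw [mem_lvl]
        constructor
        · intro x hx
          rw [Finset.mem_image] at hx
          obtain ⟨i, _, rfl⟩ := hx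
          rw [Finset.mem_Icc]
          unfold upf
          have := i.isLt
          omega
        · rw [Finset.card_image_of_injective _ upf_injective, hBcard]
      have hcolex : toColex (B.image (upf n)) ≤ toColex A₀ := by
        rw [← hupA]
        exact le_of_lt ((toColex_image_lt_toColex_image upf_strictMono).2 hBlt)
      have hBJ : B.image (upf n) ∈ J := hJ.2 A₀ hA₀ _ hBl hcolex
      rw [hJs, Finset.mem_image]
      exact ⟨B.image (upf n), hBJ, down_up B⟩
  have hkk := Finset.iterated_kk (𝒜 := Cs) (𝒞 := Js) (r := γ) (k := j) hsizedC
    (by omega) hinit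
  have hkk2 : (∂^[j] Js).card ≤ (∂^[j] Cs).card := by
    convert hkk using 4 <;> exact Subsingleton.elim _ _
  -- transfer back
  have hshJ : (∂^[j] J).card = (∂^[j] Js).card := by
    conv_lhs => rw [← hupJ]
    rw [shadow_iterate_image upf_injective]
    exact Finset.card_image_of_injective _ himg_inj
  have hshC : (∂^[j] C).card = (∂^[j] Cs).card := by
    conv_lhs => rw [← hupC]
    rw [shadow_iterate_image upf_injective]
    exact Finset.card_image_of_injective _ himg_inj
  omega
end Transfer

/-- Main two-endpoint lemma, by strong induction on the ground size. -/
lemma lemM (ν : ℕ) : ∀ (γ : ℕ) (I : Finset ℕ) (b : ℕ → ℕ) (J : Finset (Finset ℕ)),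
    γ ≤ ν → (∀ i ∈ I, 1 ≤ b i ∧ b i ≤ γ) → IsSeg ν γ J → J.Nonempty →
    J.card + ∑ i ∈ I, ν.choose (b i) ≤
      max (1 + ∑ i ∈ I, (ν.choose (b i) - γ.choose (b i))) (ν.choose γ)
        + ∑ i ∈ I, (∂^[γ - b i] J).card := by
  induction ν using Nat.strong_induction_on with
  | _ ν IH =>
  intro γ I b J hγν hb hJ hne
  by_cases hγ0 : γ = 0
  · subst hγ0
    have hI : I = ∅ := Finset.eq_empty_of_forall_notMem fun i hi => by
      have := hb i hi; omega
    subst hI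
    have hJcard : J.card = 1 := by
      have hsub : J ⊆ {∅} := by
        intro A hA
        have := mem_lvl.1 (hJ.1 hA)
        rw [Finset.mem_singleton, ← Finset.card_eq_zero]
        exact this.2
      have := Finset.card_le_card hsub
      have hne' := Finset.card_pos.2 hne
      simp only [Finset.card_singleton] at this
      omega
    simp [hJcard]
  by_cases hγν' : γ = ν
  · subst hγν'
    have hJeq : J = {Finset.Icc 1 γ} := by
      apply Finset.Subset.antisymm
      · rw [← lvl_self_singleton]; exact hJ.1
      · rw [Finset.singleton_subset_iff]
        obtain ⟨A, hA⟩ := hne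
        have := hJ.1 hA
        rw [lvl_self_singleton, Finset.mem_singleton] at this
        rwa [← this]
    have hJcard : J.card = 1 := by rw [hJeq]; simp
    have hsh : ∀ i ∈ I, (∂^[γ - b i] J).card = γ.choose (b i) := by
      intro i hi
      have : J = lvl γ γ := by rw [hJeq, lvl_self_singleton]
      rw [this, shadow_full_level (hb i hi).2, card_lvl]
    rw [hJcard, Finset.sum_congr rfl hsh, Nat.choose_self]
    have h1 : 1 ≤ max (1 + ∑ i ∈ I, (γ.choose (b i) - γ.choose (b i))) 1 := le_max_right _ _
    omega
  -- now 1 ≤ γ ≤ ν - 1, so 1 ≤ ν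
  have hγ1 : 1 ≤ γ := by omega
  have hγν2 : γ ≤ ν - 1 := by omega
  have h1 : 1 ≤ ν := by omega
  by_cases htop : ∃ A ∈ J, ν ∈ A
  · -- peel branch
    obtain ⟨A₀, hA₀, hνA₀⟩ := htop
    have hlow := lower_subset_of_top hJ hA₀ hνA₀ h1
    have hJ1seg := peel_seg hJ h1 hγ1
    have hJ1ne := peel_nonempty (γ := γ) hA₀ hνA₀
    have hcards := card_split hJ hlow h1 hγν2
    have hbI₂ : ∀ i ∈ I.filter (fun i => 2 ≤ b i), 1 ≤ b i - 1 ∧ b i - 1 ≤ γ - 1 := by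
      intro i hi
      rw [Finset.mem_filter] at hi
      have := hb i hi.1
      have := hi.2
      omega
    have IHres := IH (ν-1) (by omega) (γ-1) (I.filter (fun i => 2 ≤ b i))
      (fun i => b i - 1) (peel ν J) (by omega) hbI₂ hJ1seg hJ1ne
    have hexp : ∀ i ∈ I.filter (fun i => 2 ≤ b i), (γ-1) - (b i - 1) = γ - b i := by
      intro i hi
      have := hbI₂ i hi
      omega
    have hshsum : ∑ i ∈ I.filter (fun i => 2 ≤ b i), (∂^[(γ-1) - (b i - 1)] (peel ν J)).card
        = ∑ i ∈ I.filter (fun i => 2 ≤ b i), (∂^[γ - b i] (peel ν J)).card := by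
      refine Finset.sum_congr rfl fun i hi => ?_
      rw [show (γ-1) - (b i - 1) = γ - b i from hexp i hi]
    rw [hshsum] at IHres
    have hshadow2 : ∀ i ∈ I.filter (fun i => 2 ≤ b i),
        (ν-1).choose (b i) + (∂^[γ - b i] (peel ν J)).card ≤ (∂^[γ - b i] J).card := by
      intro i hi
      rw [Finset.mem_filter] at hi
      exact shadow_card_split hJ hlow h1 hγν2 (hb i hi.1).1 (hb i hi.1).2
    have hshadow1 : ∀ i ∈ I, i ∉ I.filter (fun i => 2 ≤ b i) →
        (ν-1).choose (b i) + 1 ≤ (∂^[γ - b i] J).card := by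
      intro i hi hni
      have hbi1 := (hb i hi).1
      have hstep := shadow_card_split hJ hlow h1 hγν2 (hb i hi).1 (hb i hi).2
      have hne1 : (∂^[γ - b i] (peel ν J)).Nonempty := by
        obtain ⟨A', hA'⟩ := hJ1ne
        refine shadow_iterate_nonempty hA' ?_
        have := mem_lvl.1 (hJ1seg.1 hA')
        rw [this.2]
        omega
      have := Finset.card_pos.2 hne1
      omega
    have hsum_split : ∑ i ∈ I, (ν-1).choose (b i - 1)
        = ∑ i ∈ I.filter (fun i => 2 ≤ b i), (ν-1).choose (b i - 1)
          + ∑ i ∈ I.filter (fun i => ¬ 2 ≤ b i), (ν-1).choose (b i - 1) :=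
      (Finset.sum_filter_add_sum_filter_not I _ _).symm
    have hcard1 : ∑ i ∈ I.filter (fun i => ¬ 2 ≤ b i), (ν-1).choose (b i - 1)
        = (I.filter (fun i => ¬ 2 ≤ b i)).card := by
      rw [Finset.card_eq_sum_ones]
      refine Finset.sum_congr rfl fun i hi => ?_
      rw [Finset.mem_filter] at hi
      have := hb i hi.1
      have hb1 : b i = 1 := by omega
      rw [hb1]
      simp
    have hpascal_sum : ∑ i ∈ I, ν.choose (b i)
        = ∑ i ∈ I, (ν-1).choose (b i) + ∑ i ∈ I, (ν-1).choose (b i - 1) := by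
      rw [← Finset.sum_add_distrib]
      refine Finset.sum_congr rfl fun i hi => ?_
      have := pascal' ν (b i) h1 (hb i hi).1
      omega
    have hSD : ∑ i ∈ I, (ν-1).choose (b i)
        + ∑ i ∈ I.filter (fun i => 2 ≤ b i), (∂^[γ - b i] (peel ν J)).card
        + (I.filter (fun i => ¬ 2 ≤ b i)).card ≤ ∑ i ∈ I, (∂^[γ - b i] J).card := by
      have hsplitI : ∑ i ∈ I, (∂^[γ - b i] J).card
          = ∑ i ∈ I.filter (fun i => 2 ≤ b i), (∂^[γ - b i] J).card
            + ∑ i ∈ I.filter (fun i => ¬ 2 ≤ b i), (∂^[γ - b i] J).card :=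
        (Finset.sum_filter_add_sum_filter_not I _ _).symm
      have hsplitB : ∑ i ∈ I, (ν-1).choose (b i)
          = ∑ i ∈ I.filter (fun i => 2 ≤ b i), (ν-1).choose (b i)
            + ∑ i ∈ I.filter (fun i => ¬ 2 ≤ b i), (ν-1).choose (b i) :=
        (Finset.sum_filter_add_sum_filter_not I _ _).symm
      have h2 : ∑ i ∈ I.filter (fun i => 2 ≤ b i), (ν-1).choose (b i)
          + ∑ i ∈ I.filter (fun i => 2 ≤ b i), (∂^[γ - b i] (peel ν J)).card
          ≤ ∑ i ∈ I.filter (fun i => 2 ≤ b i), (∂^[γ - b i] J).card := by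
        rw [← Finset.sum_add_distrib]
        exact Finset.sum_le_sum hshadow2
      have h3 : ∑ i ∈ I.filter (fun i => ¬ 2 ≤ b i), (ν-1).choose (b i)
          + (I.filter (fun i => ¬ 2 ≤ b i)).card
          ≤ ∑ i ∈ I.filter (fun i => ¬ 2 ≤ b i), (∂^[γ - b i] J).card := by
        rw [Finset.card_eq_sum_ones, ← Finset.sum_add_distrib]
        refine Finset.sum_le_sum fun i hi => ?_
        have hi' := hi
        rw [Finset.mem_filter] at hi'
        exact hshadow1 i hi'.1 (by rw [Finset.mem_filter]; tauto)
      omega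
    have hNL2 := NL2 (I := I) (b := b) h1 hγ1 hγν2 hb
    have hpascalγ : (ν-1).choose γ + (ν-1).choose (γ-1) = ν.choose γ := by
      have := pascal' ν γ h1 hγ1
      omega
    have hYmax : ν.choose γ ≤ max (1 + ∑ i ∈ I, (ν.choose (b i) - γ.choose (b i))) (ν.choose γ) :=
      le_max_right _ _
    omega
  · -- no-top branch
    push_neg at htop
    have hsub := seg_subset_lower hJ htop
    have hJ' := seg_lower hJ hsub
    have IHres := IH (ν-1) (by omega) γ I b J (by omega)
      (fun i hi => ⟨(hb i hi).1, (hb i hi).2⟩) hJ' hne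
    have hpascal_sum : ∑ i ∈ I, ν.choose (b i)
        = ∑ i ∈ I, (ν-1).choose (b i) + ∑ i ∈ I, (ν-1).choose (b i - 1) := by
      rw [← Finset.sum_add_distrib]
      refine Finset.sum_congr rfl fun i hi => ?_
      have := pascal' ν (b i) h1 (hb i hi).1
      omega
    have hXid : (1 + ∑ i ∈ I, ((ν-1).choose (b i) - γ.choose (b i)))
        + ∑ i ∈ I, (ν-1).choose (b i - 1)
        = 1 + ∑ i ∈ I, (ν.choose (b i) - γ.choose (b i)) := by
      have : ∑ i ∈ I, ((ν-1).choose (b i) - γ.choose (b i)) + ∑ i ∈ I, (ν-1).choose (b i - 1)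
          = ∑ i ∈ I, (ν.choose (b i) - γ.choose (b i)) := by
        rw [← Finset.sum_add_distrib]
        refine Finset.sum_congr rfl fun i hi => ?_
        have hp := pascal' ν (b i) h1 (hb i hi).1
        have hle : γ.choose (b i) ≤ (ν-1).choose (b i) :=
          Nat.choose_le_choose _ (by omega)
        omega
      omega
    have hNL1 := NL1 (I := I) (b := b) h1 hγ1 hγν2 hb
    have hX1 : (1 + ∑ i ∈ I, ((ν-1).choose (b i) - γ.choose (b i)))
        + ∑ i ∈ I, (ν-1).choose (b i - 1)
        ≤ max (1 + ∑ i ∈ I, (ν.choose (b i) - γ.choose (b i))) (ν.choose γ) := by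
      rw [hXid]; exact le_max_left _ _
    omega

lemma gam_one {ν γ : ℕ} {I : Finset ℕ} {b : ℕ → ℕ} (hν : 1 ≤ ν) (hγ : 1 ≤ γ) (hγν : γ ≤ ν) :
    Gam ν γ I b 1 = (ν-1).choose γ + ∑ i ∈ I, (ν-1).choose (b i - 1) := by
  unfold Gam
  have hp := pascal' ν γ hν hγ
  have hle := choose_sub_le 1 ν γ hγν
  omega

lemma gam_lift {ν γ : ℕ} {I : Finset ℕ} {b : ℕ → ℕ} (hν : 1 ≤ ν) (hγ : 1 ≤ γ) (hγν : γ ≤ ν)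
    (d : ℕ) :
    (ν-1).choose γ + Gam (ν-1) (γ-1) I (fun i => b i - 1) d = Gam ν γ I b (d+1) := by
  unfold Gam
  have hsum : ∑ i ∈ I, (ν-1-d).choose ((fun i => b i - 1) i - d)
      = ∑ i ∈ I, (ν-(d+1)).choose (b i - (d+1)) := by
    refine Finset.sum_congr rfl fun i hi => ?_
    have e1 : ν - 1 - d = ν - (d+1) := by omega
    have e2 : (fun i => b i - 1) i - d = b i - (d+1) := by simp; omega
    rw [e1, e2]
  rw [hsum]
  have e3 : (γ-1) - d = γ - (d+1) := by omega
  have e4 : (ν-1) - d = ν - (d+1) := by omega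
  rw [e3, e4]
  have hp := pascal' ν γ hν hγ
  have hle1 : (ν-(d+1)).choose (γ-(d+1)) ≤ (ν-1).choose (γ-1) := by
    have := choose_sub_le d (ν-1) (γ-1) (by omega)
    have e5 : ν - 1 - d = ν - (d+1) := by omega
    have e6 : γ - 1 - d = γ - (d+1) := by omega
    rw [e5, e6] at this
    exact this
  have hle2 : (ν-(d+1)).choose (γ-(d+1)) ≤ ν.choose γ := choose_sub_le (d+1) ν γ hγν
  omega

/-- Lemma W: the corner bound, by strong induction on β. -/
lemma lemW (β : ℕ) : ∀ (ν γ : ℕ) (I : Finset ℕ) (b : ℕ → ℕ) (J : Finset (Finset ℕ)),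
    1 ≤ β → (∀ i ∈ I, β ≤ b i ∧ b i ≤ γ) → γ ≤ ν → I.Nonempty → IsSeg ν γ J → J.Nonempty →
    J.card + (ν-β).choose (γ-β) ≤ ν.choose γ →
    J.card + ∑ i ∈ I, ν.choose (b i) ≤
      max (1 + ∑ i ∈ I, (ν.choose (b i) - γ.choose (b i)))
          ((Finset.Icc 1 β).sup (Gam ν γ I b))
        + ∑ i ∈ I, (∂^[γ - b i] J).card := by
  induction β using Nat.strong_induction_on with
  | _ β IH =>
  intro ν γ I b J hβ1 hb hγν hIne hJ hne hwit
  obtain ⟨i0, hi0⟩ := hIne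
  have hβγ : β ≤ γ := le_trans (hb i0 hi0).1 (hb i0 hi0).2
  have hγ1 : 1 ≤ γ := le_trans hβ1 hβγ
  have hν1 : 1 ≤ ν := le_trans hγ1 hγν
  have hγν2 : γ ≤ ν - 1 := by
    rcases Nat.lt_or_ge γ ν with h | h
    · omega
    · -- γ = ν: contradiction with witness
      have hγν' : γ = ν := by omega
      exfalso
      have : (ν-β).choose (γ-β) = 1 := by rw [hγν']; exact Nat.choose_self _
      have hcard := Finset.card_pos.2 hne
      have : ν.choose γ = 1 := by rw [hγν']; exact Nat.choose_self _
      omega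
  have hsup1 : Gam ν γ I b 1 ≤ (Finset.Icc 1 β).sup (Gam ν γ I b) :=
    Finset.le_sup (by rw [Finset.mem_Icc]; omega)
  by_cases hsmall : J.card ≤ (ν-1).choose γ
  · -- small case : use lemM on the lower ground set
    have hnotop : ∀ A ∈ J, ν ∉ A := by
      intro A hA hν
      have hlow := lower_subset_of_top hJ hA hν hν1
      have hcards := card_split hJ hlow hν1 hγν2
      have hpne := peel_nonempty (γ := γ) hA hν
      have := Finset.card_pos.2 hpne
      omega
    have hJ' := seg_lower hJ (seg_subset_lower hJ hnotop)
    have hb' : ∀ i ∈ I, 1 ≤ b i ∧ b i ≤ γ := fun i hi => ⟨le_trans hβ1 (hb i hi).1, (hb i hi).2⟩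
    have hM := lemM (ν-1) γ I b J (by omega) hb' hJ' hne
    have hpascal_sum : ∑ i ∈ I, ν.choose (b i)
        = ∑ i ∈ I, (ν-1).choose (b i) + ∑ i ∈ I, (ν-1).choose (b i - 1) := by
      rw [← Finset.sum_add_distrib]
      refine Finset.sum_congr rfl fun i hi => ?_
      have := pascal' ν (b i) hν1 (hb' i hi).1
      omega
    have hXid : ∑ i ∈ I, ((ν-1).choose (b i) - γ.choose (b i))
        + ∑ i ∈ I, (ν-1).choose (b i - 1)
        = ∑ i ∈ I, (ν.choose (b i) - γ.choose (b i)) := by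
      rw [← Finset.sum_add_distrib]
      refine Finset.sum_congr rfl fun i hi => ?_
      have hp := pascal' ν (b i) hν1 (hb' i hi).1
      have hle : γ.choose (b i) ≤ (ν-1).choose (b i) :=
        Nat.choose_le_choose _ (by omega)
      omega
    have hgam1 := gam_one (I := I) (b := b) hν1 hγ1 hγν
    have hmaxl : (1 + ∑ i ∈ I, (ν.choose (b i) - γ.choose (b i))) ≤
        max (1 + ∑ i ∈ I, (ν.choose (b i) - γ.choose (b i)))
          ((Finset.Icc 1 β).sup (Gam ν γ I b)) := le_max_left _ _
    have hmaxr : (Finset.Icc 1 β).sup (Gam ν γ I b) ≤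
        max (1 + ∑ i ∈ I, (ν.choose (b i) - γ.choose (b i)))
          ((Finset.Icc 1 β).sup (Gam ν γ I b)) := le_max_right _ _
    rcases max_choice (1 + ∑ i ∈ I, ((ν-1).choose (b i) - γ.choose (b i))) ((ν-1).choose γ)
      with hmc | hmc <;> rw [hmc] at hM <;> omega
  · -- big case : peel once and use IH with β - 1
    push_neg at hsmall
    have hβ2 : 2 ≤ β := by
      rcases Nat.lt_or_ge β 2 with h | h
      · exfalso
        have hβ1' : β = 1 := by omega
        subst hβ1'
        have hp := pascal' ν γ hν1 hγ1
        omega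
      · exact h
    have htop : ∃ A ∈ J, ν ∈ A := by
      by_contra hcon
      push_neg at hcon
      have := Finset.card_le_card (seg_subset_lower hJ hcon)
      rw [card_lvl] at this
      omega
    obtain ⟨A₀, hA₀, hνA₀⟩ := htop
    have hlow := lower_subset_of_top hJ hA₀ hνA₀ hν1
    have hJ1seg := peel_seg hJ hν1 hγ1
    have hJ1ne := peel_nonempty (γ := γ) hA₀ hνA₀
    have hcards := card_split hJ hlow hν1 hγν2
    have hpν : ν.choose γ = (ν-1).choose γ + (ν-1).choose (γ-1) := by
      have := pascal' ν γ hν1 hγ1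
      omega
    have hwit' : (peel ν J).card + ((ν-1)-(β-1)).choose ((γ-1)-(β-1)) ≤ (ν-1).choose (γ-1) := by
      have e1 : (ν-1)-(β-1) = ν - β := by omega
      have e2 : (γ-1)-(β-1) = γ - β := by omega
      rw [e1, e2]
      omega
    have hb' : ∀ i ∈ I, β - 1 ≤ b i - 1 ∧ b i - 1 ≤ γ - 1 := by
      intro i hi
      have := hb i hi
      omega
    have IHres := IH (β-1) (by omega) (ν-1) (γ-1) I (fun i => b i - 1) (peel ν J)
      (by omega) hb' (by omega) ⟨i0, hi0⟩ hJ1seg hJ1ne hwit'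
    have hexp : ∀ i ∈ I, (γ-1) - (b i - 1) = γ - b i := by
      intro i hi
      have := hb i hi
      omega
    have hshsum : ∑ i ∈ I, (∂^[(γ-1) - (b i - 1)] (peel ν J)).card
        = ∑ i ∈ I, (∂^[γ - b i] (peel ν J)).card := by
      refine Finset.sum_congr rfl fun i hi => ?_
      rw [show (γ-1) - (b i - 1) = γ - b i from hexp i hi]
    rw [hshsum] at IHres
    have hshadow : ∀ i ∈ I, (ν-1).choose (b i) + (∂^[γ - b i] (peel ν J)).card
        ≤ (∂^[γ - b i] J).card := by
      intro i hi
      exact shadow_card_split hJ hlow hν1 hγν2 (by have := hb i hi; omega) (hb i hi).2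
    have hSD : ∑ i ∈ I, (ν-1).choose (b i) + ∑ i ∈ I, (∂^[γ - b i] (peel ν J)).card
        ≤ ∑ i ∈ I, (∂^[γ - b i] J).card := by
      rw [← Finset.sum_add_distrib]
      exact Finset.sum_le_sum hshadow
    have hpascal_sum : ∑ i ∈ I, ν.choose (b i)
        = ∑ i ∈ I, (ν-1).choose (b i) + ∑ i ∈ I, (ν-1).choose (b i - 1) := by
      rw [← Finset.sum_add_distrib]
      refine Finset.sum_congr rfl fun i hi => ?_
      have := pascal' ν (b i) hν1 (by have := hb i hi; omega : 1 ≤ b i)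
      omega
    -- the X₁ component is ≤ Gam 1
    have hX1 : (ν-1).choose γ + (1 + ∑ i ∈ I, ((ν-1).choose ((fun i => b i - 1) i)
          - (γ-1).choose ((fun i => b i - 1) i)))
        ≤ Gam ν γ I b 1 := by
      have hsum1 : ∑ i ∈ I, ((ν-1).choose ((fun i => b i - 1) i)
            - (γ-1).choose ((fun i => b i - 1) i))
          + ∑ i ∈ I, (γ-1).choose (b i - 1) = ∑ i ∈ I, (ν-1).choose (b i - 1) := by
        rw [← Finset.sum_add_distrib]
        refine Finset.sum_congr rfl fun i hi => ?_
        simp only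
        have hle : (γ-1).choose (b i - 1) ≤ (ν-1).choose (b i - 1) :=
          Nat.choose_le_choose _ (by omega)
        omega
      have hpos : 1 ≤ ∑ i ∈ I, (γ-1).choose (b i - 1) := by
        have h0 : 0 < (γ-1).choose (b i0 - 1) := Nat.choose_pos (by have := hb i0 hi0; omega)
        calc 1 ≤ (γ-1).choose (b i0 - 1) := h0
          _ ≤ ∑ i ∈ I, (γ-1).choose (b i - 1) :=
            Finset.single_le_sum (f := fun i => (γ-1).choose (b i - 1))
              (fun i _ => Nat.zero_le _) hi0
      have hgam1 := gam_one (I := I) (b := b) hν1 hγ1 hγν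
      omega
    -- the sup component lifts
    have hsupβ : (ν-1).choose γ + (Finset.Icc 1 (β-1)).sup (Gam (ν-1) (γ-1) I (fun i => b i - 1))
        ≤ (Finset.Icc 1 β).sup (Gam ν γ I b) := by
      obtain ⟨d₀, hd₀mem, hd₀⟩ := Finset.exists_mem_eq_sup (Finset.Icc 1 (β-1))
        (by rw [Finset.nonempty_Icc]; omega) (Gam (ν-1) (γ-1) I (fun i => b i - 1))
      rw [hd₀]
      rw [gam_lift hν1 hγ1 hγν d₀]
      refine Finset.le_sup ?_
      rw [Finset.mem_Icc] at hd₀mem ⊢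
      omega
    have hmaxl : (1 + ∑ i ∈ I, (ν.choose (b i) - γ.choose (b i))) ≤
        max (1 + ∑ i ∈ I, (ν.choose (b i) - γ.choose (b i)))
          ((Finset.Icc 1 β).sup (Gam ν γ I b)) := le_max_left _ _
    have hmaxr : (Finset.Icc 1 β).sup (Gam ν γ I b) ≤
        max (1 + ∑ i ∈ I, (ν.choose (b i) - γ.choose (b i)))
          ((Finset.Icc 1 β).sup (Gam ν γ I b)) := le_max_right _ _
    rcases max_choice (1 + ∑ i ∈ I, ((ν-1).choose ((fun i => b i - 1) i)
        - (γ-1).choose ((fun i => b i - 1) i)))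
      ((Finset.Icc 1 (β-1)).sup (Gam (ν-1) (γ-1) I (fun i => b i - 1)))
      with hmc | hmc <;> rw [hmc] at IHres <;> omega

lemma lower_isSeg {ν γ : ℕ} (h1 : 1 ≤ ν) : IsSeg ν γ (lvl (ν-1) γ) := by
  refine ⟨lvl_mono, ?_⟩
  intro A hA B hB hle
  by_cases hν : ν ∈ B
  · exfalso
    have := colex_lt_of_top hν (mem_lower_lt hA h1)
    exact absurd hle (not_le_of_gt this)
  · exact subset_lower_of_mem hB hν

/-- The top-level combinatorial chain. -/
lemma topW (ν γ β : ℕ) (I : Finset ℕ) (b : ℕ → ℕ) (C : Finset (Finset ℕ))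
    (hβ1 : 1 ≤ β) (hb : ∀ i ∈ I, β ≤ b i ∧ b i ≤ γ) (hγν2 : γ ≤ ν - 1) (hγ1 : 1 ≤ γ)
    (hν1 : 1 ≤ ν)
    (hIne : I.Nonempty) (hC : C ⊆ lvl ν γ)
    (hbig : (ν-1).choose γ ≤ C.card)
    (hwit : C.card + (ν-β).choose (γ-β) ≤ ν.choose γ) :
    C.card + ∑ i ∈ I, ν.choose (b i) ≤
      max (Gam ν γ I b 1) (Gam ν γ I b β) + ∑ i ∈ I, (∂^[γ - b i] C).card := by
  obtain ⟨i0, hi0⟩ := hIne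
  have hβγ : β ≤ γ := le_trans (hb i0 hi0).1 (hb i0 hi0).2
  have hγν : γ ≤ ν := by omega
  have hgam1 := gam_one (I := I) (b := b) hν1 hγ1 hγν
  have hpν : ν.choose γ = (ν-1).choose γ + (ν-1).choose (γ-1) := by
    have := pascal' ν γ hν1 hγ1
    omega
  have hmax1 : Gam ν γ I b 1 ≤ max (Gam ν γ I b 1) (Gam ν γ I b β) := le_max_left _ _
  have hmaxβ : Gam ν γ I b β ≤ max (Gam ν γ I b 1) (Gam ν γ I b β) := le_max_right _ _
  have hpascal_sum : ∑ i ∈ I, ν.choose (b i)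
      = ∑ i ∈ I, (ν-1).choose (b i) + ∑ i ∈ I, (ν-1).choose (b i - 1) := by
    rw [← Finset.sum_add_distrib]
    refine Finset.sum_congr rfl fun i hi => ?_
    have := pascal' ν (b i) hν1 (by have := hb i hi; omega : 1 ≤ b i)
    omega
  by_cases hsmall : C.card ≤ (ν-1).choose γ
  · -- e = C(ν-1, γ): compare with the full lower level
    have hlowseg : IsSeg ν γ (lvl (ν-1) γ) := lower_isSeg hν1
    have hlowcard : (lvl (ν-1) γ).card = (ν-1).choose γ := card_lvl _ _
    have hkk : ∀ j, (∂^[j] (lvl (ν-1) γ)).card ≤ (∂^[j] C).card := by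
      intro j
      exact kk_nat γ C (lvl (ν-1) γ) hC hlowseg (by omega) j
    have hsh : ∀ i ∈ I, (ν-1).choose (b i) ≤ (∂^[γ - b i] C).card := by
      intro i hi
      refine le_trans ?_ (hkk (γ - b i))
      have hsub := lower_subset_shadow (J := lvl (ν-1) γ) (Finset.Subset.refl _)
        hγν2 (hb i hi).2
      calc (ν-1).choose (b i) = (lvl (ν-1) (b i)).card := (card_lvl _ _).symm
        _ ≤ (∂^[γ - b i] (lvl (ν-1) γ)).card := Finset.card_le_card hsub
    have hshs : ∑ i ∈ I, (ν-1).choose (b i) ≤ ∑ i ∈ I, (∂^[γ - b i] C).card :=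
      Finset.sum_le_sum hsh
    omega
  · -- big case
    push_neg at hsmall
    have hwitpos : 1 ≤ (ν-β).choose (γ-β) := Nat.choose_pos (by omega)
    have he_le : C.card ≤ ν.choose γ := by omega
    obtain ⟨J, hJseg, hJcard⟩ := exists_seg ν γ C.card he_le
    have hkk : ∀ j, (∂^[j] J).card ≤ (∂^[j] C).card := by
      intro j
      exact kk_nat γ C J hC hJseg (by omega) j
    have hJne : J.Nonempty := Finset.card_pos.1 (by omega)
    have hβ2 : 2 ≤ β := by
      rcases Nat.lt_or_ge β 2 with h | h
      · exfalso
        have : β = 1 := by omega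
        subst this
        omega
      · exact h
    have htop : ∃ A ∈ J, ν ∈ A := by
      by_contra hcon
      push_neg at hcon
      have := Finset.card_le_card (seg_subset_lower hJseg hcon)
      rw [card_lvl] at this
      omega
    obtain ⟨A₀, hA₀, hνA₀⟩ := htop
    have hlow := lower_subset_of_top hJseg hA₀ hνA₀ hν1
    have hJ1seg := peel_seg hJseg hν1 hγ1
    have hJ1ne := peel_nonempty (γ := γ) hA₀ hνA₀
    have hcards := card_split hJseg hlow hν1 hγν2
    have hwit' : (peel ν J).card + ((ν-1)-(β-1)).choose ((γ-1)-(β-1)) ≤ (ν-1).choose (γ-1) := by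
      have e1 : (ν-1)-(β-1) = ν - β := by omega
      have e2 : (γ-1)-(β-1) = γ - β := by omega
      rw [e1, e2]
      omega
    have hb' : ∀ i ∈ I, β - 1 ≤ b i - 1 ∧ b i - 1 ≤ γ - 1 := by
      intro i hi
      have := hb i hi
      omega
    have IHres := lemW (β-1) (ν-1) (γ-1) I (fun i => b i - 1) (peel ν J)
      (by omega) hb' (by omega) ⟨i0, hi0⟩ hJ1seg hJ1ne hwit'
    have hshsum : ∑ i ∈ I, (∂^[(γ-1) - (b i - 1)] (peel ν J)).card
        = ∑ i ∈ I, (∂^[γ - b i] (peel ν J)).card := by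
      refine Finset.sum_congr rfl fun i hi => ?_
      rw [show (γ-1) - (b i - 1) = γ - b i by have := hb i hi; omega]
    rw [hshsum] at IHres
    have hshadow : ∀ i ∈ I, (ν-1).choose (b i) + (∂^[γ - b i] (peel ν J)).card
        ≤ (∂^[γ - b i] C).card := by
      intro i hi
      exact le_trans
        (shadow_card_split hJseg hlow hν1 hγν2 (by have := hb i hi; omega) (hb i hi).2)
        (hkk _)
    have hSD : ∑ i ∈ I, (ν-1).choose (b i) + ∑ i ∈ I, (∂^[γ - b i] (peel ν J)).card
        ≤ ∑ i ∈ I, (∂^[γ - b i] C).card := by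
      rw [← Finset.sum_add_distrib]
      exact Finset.sum_le_sum hshadow
    -- X₁ component is ≤ Gam 1
    have hX1 : (ν-1).choose γ + (1 + ∑ i ∈ I, ((ν-1).choose ((fun i => b i - 1) i)
          - (γ-1).choose ((fun i => b i - 1) i)))
        ≤ Gam ν γ I b 1 := by
      have hsum1 : ∑ i ∈ I, ((ν-1).choose ((fun i => b i - 1) i)
            - (γ-1).choose ((fun i => b i - 1) i))
          + ∑ i ∈ I, (γ-1).choose (b i - 1) = ∑ i ∈ I, (ν-1).choose (b i - 1) := by
        rw [← Finset.sum_add_distrib]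
        refine Finset.sum_congr rfl fun i hi => ?_
        simp only
        have hle : (γ-1).choose (b i - 1) ≤ (ν-1).choose (b i - 1) :=
          Nat.choose_le_choose _ (by omega)
        omega
      have hpos : 1 ≤ ∑ i ∈ I, (γ-1).choose (b i - 1) := by
        have h0 : 0 < (γ-1).choose (b i0 - 1) := Nat.choose_pos (by have := hb i0 hi0; omega)
        calc 1 ≤ (γ-1).choose (b i0 - 1) := h0
          _ ≤ ∑ i ∈ I, (γ-1).choose (b i - 1) :=
            Finset.single_le_sum (f := fun i => (γ-1).choose (b i - 1))
              (fun i _ => Nat.zero_le _) hi0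
      omega
    -- sup component lifts into the quasiconvex bound
    have hsupβ : (ν-1).choose γ
        + (Finset.Icc 1 (β-1)).sup (Gam (ν-1) (γ-1) I (fun i => b i - 1))
        ≤ max (Gam ν γ I b 1) (Gam ν γ I b β) := by
      obtain ⟨d₀, hd₀mem, hd₀⟩ := Finset.exists_mem_eq_sup (Finset.Icc 1 (β-1))
        (by rw [Finset.nonempty_Icc]; omega) (Gam (ν-1) (γ-1) I (fun i => b i - 1))
      rw [hd₀, gam_lift hν1 hγ1 hγν d₀]
      rw [Finset.mem_Icc] at hd₀mem
      exact gam_le_max hb hγν hβγ (d₀+1) (by omega) (by omega)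
    rw [hJcard] at hcards
    rcases max_choice (1 + ∑ i ∈ I, ((ν-1).choose ((fun i => b i - 1) i)
        - (γ-1).choose ((fun i => b i - 1) i)))
      ((Finset.Icc 1 (β-1)).sup (Gam (ν-1) (γ-1) I (fun i => b i - 1)))
      with hmc | hmc <;> rw [hmc] at IHres <;> omega

/-- counting supersets of a fixed set within a level -/
lemma count_supersets {n γ kb : ℕ} {B0 : Finset ℕ} (hB0 : B0 ⊆ Finset.Icc 1 n)
    (hB0card : B0.card = kb) (hkγ : kb ≤ γ) :
    ((lvl n γ).filter (fun C => B0 ⊆ C)).card = (n - kb).choose (γ - kb) := by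
  classical
  have himg : (lvl n γ).filter (fun C => B0 ⊆ C)
      = ((Finset.Icc 1 n \ B0).powersetCard (γ - kb)).image (fun D => D ∪ B0) := by
    ext C
    rw [Finset.mem_filter, Finset.mem_image]
    constructor
    · rintro ⟨hCl, hBC⟩
      rw [mem_lvl] at hCl
      refine ⟨C \ B0, ?_, Finset.sdiff_union_of_subset hBC⟩
      rw [Finset.mem_powersetCard]
      constructor
      · intro x hx
        rw [Finset.mem_sdiff] at hx ⊢
        exact ⟨hCl.1 hx.1, hx.2⟩
      · rw [Finset.card_sdiff_of_subset hBC, hCl.2, hB0card]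
    · rintro ⟨D, hD, rfl⟩
      rw [Finset.mem_powersetCard] at hD
      have hDdisj : Disjoint D B0 := by
        rw [Finset.disjoint_left]
        intro x hx hxB
        have := hD.1 hx
        rw [Finset.mem_sdiff] at this
        exact this.2 hxB
      constructor
      · rw [mem_lvl]
        constructor
        · intro x hx
          rcases Finset.mem_union.1 hx with hx | hx
          · exact (Finset.mem_sdiff.1 (hD.1 hx)).1
          · exact hB0 hx
        · rw [Finset.card_union_of_disjoint hDdisj, hD.2, hB0card]
          omega
      · exact Finset.subset_union_right
  have hinj : Set.InjOn (fun D => D ∪ B0)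
      ((Finset.Icc 1 n \ B0).powersetCard (γ - kb) : Finset (Finset ℕ)) := by
    intro D₁ h₁ D₂ h₂ h12
    rw [Finset.mem_coe, Finset.mem_powersetCard] at h₁ h₂
    have hd : ∀ D : Finset ℕ, D ⊆ Finset.Icc 1 n \ B0 → (D ∪ B0) \ B0 = D := by
      intro D hD
      ext x
      rw [Finset.mem_sdiff, Finset.mem_union]
      constructor
      · rintro ⟨h | h, hn⟩
        · exact h
        · exact absurd h hn
      · intro hx
        have := hD hx
        rw [Finset.mem_sdiff] at this
        exact ⟨Or.inl hx, this.2⟩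
    have h12' : D₁ ∪ B0 = D₂ ∪ B0 := h12
    calc D₁ = (D₁ ∪ B0) \ B0 := (hd D₁ h₁.1).symm
      _ = (D₂ ∪ B0) \ B0 := by rw [h12']
      _ = D₂ := hd D₂ h₂.1
  rw [himg, Finset.card_image_of_injOn hinj, Finset.card_powersetCard,
    Finset.card_sdiff_of_subset hB0, Nat.card_Icc, hB0card]
  have : n + 1 - 1 - kb = n - kb := by omega
  rw [this]


end CrossInt

open CrossInt in
theorem stmt_13 (r n : ℕ) (k : ℕ → ℕ) (i' kb : ℕ) (hr : 2 ≤ r) (hn : 0 < n)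
    (hkpos : ∀ i ∈ Finset.Icc 1 r, 0 < k i)
    (hi' : i' ∈ Finset.Icc 1 r)
    (hkb_le : ∀ i ∈ Finset.Icc 1 r, i ≠ i' → kb ≤ k i)
    (hkb_mem : ∃ i ∈ Finset.Icc 1 r, i ≠ i' ∧ k i = kb)
    (hni : ∀ i ∈ Finset.Icc 1 r, i ≠ i' → k i + k i' ≤ n)
    (F : ℕ → Finset (Finset ℕ))
    (hF : ∀ i ∈ Finset.Icc 1 r, F i ⊆ (Finset.Icc 1 n).powersetCard (k i))
    (hne : ∀ i ∈ Finset.Icc 1 r, (F i).Nonempty)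
    (hbig : (n - 1).choose (k i' - 1) ≤ (F i').card)
    (hcross : ∀ i ∈ Finset.Icc 1 r, ∀ j ∈ Finset.Icc 1 r, i ≠ j →
      ∀ A ∈ F i, ∀ B ∈ F j, (A ∩ B).Nonempty) :
    ∑ i ∈ Finset.Icc 1 r, (F i).card
      ≤ max (n.choose (k i') - (n - kb).choose (k i')
              + ∑ i ∈ (Finset.Icc 1 r).filter (fun i => i ≠ i'), (n - kb).choose (k i - kb))
            (∑ i ∈ Finset.Icc 1 r, (n - 1).choose (k i - 1)) := by
  classical
  obtain ⟨j0, hj0mem, hj0ne, hj0k⟩ := hkb_mem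
  set a := k i' with ha
  set γ := n - a with hγ
  set I := (Finset.Icc 1 r).filter (fun i => i ≠ i') with hI
  have ha1 : 1 ≤ a := hkpos i' hi'
  have hkb1 : 1 ≤ kb := by rw [← hj0k]; exact hkpos j0 hj0mem
  have hj0n : kb + a ≤ n := by rw [← hj0k]; exact hni j0 hj0mem hj0ne
  have han : a ≤ n - 1 := by omega
  have hγ1 : 1 ≤ γ := by omega
  have hγν2 : γ ≤ n - 1 := by omega
  have hIne : I.Nonempty := ⟨j0, by rw [hI, Finset.mem_filter]; exact ⟨hj0mem, hj0ne⟩⟩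
  have hbI : ∀ i ∈ I, kb ≤ k i ∧ k i ≤ γ := by
    intro i hi
    rw [hI, Finset.mem_filter] at hi
    refine ⟨hkb_le i hi.1 hi.2, ?_⟩
    have := hni i hi.1 hi.2
    omega
  -- the complement family
  set C : Finset (Finset ℕ) := (F i').image (fun A => Finset.Icc 1 n \ A) with hCdef
  have hFi'sub : F i' ⊆ lvl n a := hF i' hi'
  have hCsub : C ⊆ lvl n γ := by
    intro X hX
    rw [hCdef, Finset.mem_image] at hX
    obtain ⟨A, hA, rfl⟩ := hX
    have hAl := mem_lvl.1 (hFi'sub hA)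
    rw [mem_lvl]
    refine ⟨Finset.sdiff_subset, ?_⟩
    rw [Finset.card_sdiff_of_subset hAl.1, Nat.card_Icc, hAl.2]
    omega
  have hCcard : C.card = (F i').card := by
    rw [hCdef]
    apply Finset.card_image_of_injOn
    intro A hA B hB hAB
    rw [Finset.mem_coe] at hA hB
    have hA' := (mem_lvl.1 (hFi'sub hA)).1
    have hB' := (mem_lvl.1 (hFi'sub hB)).1
    have hkey : ∀ X : Finset ℕ, X ⊆ Finset.Icc 1 n →
        Finset.Icc 1 n \ (Finset.Icc 1 n \ X) = X := by
      intro X hX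
      rw [Finset.sdiff_sdiff_self_left]
      exact Finset.inter_eq_right.2 hX
    have hAB' : Finset.Icc 1 n \ A = Finset.Icc 1 n \ B := hAB
    calc A = Finset.Icc 1 n \ (Finset.Icc 1 n \ A) := (hkey A hA').symm
      _ = Finset.Icc 1 n \ (Finset.Icc 1 n \ B) := by rw [hAB']
      _ = B := hkey B hB'
  -- largeness
  have hbigγ : (n-1).choose γ ≤ C.card := by
    rw [hCcard]
    have : (n-1).choose γ = (n-1).choose (a-1) := by
      have := Nat.choose_symm (n := n-1) (k := a-1) (by omega)
      rw [show (n-1) - (a-1) = γ by omega] at this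
      exact this
    rw [this]
    exact hbig
  -- the witness bound
  obtain ⟨B0, hB0⟩ := hne j0 hj0mem
  have hB0l := mem_lvl.1 (hF j0 hj0mem hB0)
  have hwitcount := count_supersets (n := n) (γ := γ) (kb := kb) hB0l.1
    (by rw [hB0l.2]; exact hj0k) (by omega)
  have hCdisjW : Disjoint C ((lvl n γ).filter (fun X => B0 ⊆ X)) := by
    rw [Finset.disjoint_left]
    intro X hX hX2
    rw [hCdef, Finset.mem_image] at hX
    obtain ⟨A, hA, rfl⟩ := hX
    rw [Finset.mem_filter] at hX2
    have hcr := hcross i' hi' j0 hj0mem (Ne.symm hj0ne) A hA B0 hB0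
    obtain ⟨x, hx⟩ := hcr
    rw [Finset.mem_inter] at hx
    have := hX2.2 hx.2
    rw [Finset.mem_sdiff] at this
    exact this.2 hx.1
  have hwit : C.card + (n-kb).choose (γ-kb) ≤ n.choose γ := by
    rw [← hwitcount, ← card_lvl n γ]
    rw [← Finset.card_union_of_disjoint hCdisjW]
    exact Finset.card_le_card (Finset.union_subset hCsub (Finset.filter_subset _ _))
  -- per-index disjointness bound
  have hFi : ∀ i ∈ I, (F i).card + (∂^[γ - k i] C).card ≤ n.choose (k i) := by
    intro i hi
    have hiI := hi
    rw [hI, Finset.mem_filter] at hiI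
    have hFsub : F i ⊆ lvl n (k i) := hF i hiI.1
    have hshsub : ∂^[γ - k i] C ⊆ lvl n (k i) := by
      have := shadow_iterate_subset_lvl (j := γ - k i) hCsub
      rw [show γ - (γ - k i) = k i by have := hbI i hi; omega] at this
      exact this
    have hdisj : Disjoint (F i) (∂^[γ - k i] C) := by
      rw [Finset.disjoint_left]
      intro B hB hBs
      rw [Finset.mem_shadow_iterate_iff_exists_sdiff] at hBs
      obtain ⟨X, hX, hBX, _⟩ := hBs
      rw [hCdef, Finset.mem_image] at hX
      obtain ⟨A, hA, rfl⟩ := hX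
      have hcr := hcross i hiI.1 i' hi' hiI.2 B hB A hA
      obtain ⟨x, hx⟩ := hcr
      rw [Finset.mem_inter] at hx
      have := hBX hx.1
      rw [Finset.mem_sdiff] at this
      exact this.2 hx.2
    rw [← card_lvl n (k i), ← Finset.card_union_of_disjoint hdisj]
    exact Finset.card_le_card (Finset.union_subset hFsub hshsub)
  -- main chain
  have hmain := topW n γ kb I k C hkb1 hbI hγν2 hγ1 (by omega) hIne hCsub hbigγ hwit
  -- sum splitting over Icc 1 r
  have hfilter : (Finset.Icc 1 r).filter (fun i => ¬ i ≠ i') = {i'} := by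
    ext x
    rw [Finset.mem_filter, Finset.mem_singleton]
    constructor
    · rintro ⟨_, h⟩
      simpa using h
    · rintro rfl
      exact ⟨hi', by simp⟩
  have hsplit : ∀ f : ℕ → ℕ, ∑ i ∈ Finset.Icc 1 r, f i = f i' + ∑ i ∈ I, f i := by
    intro f
    rw [hI, ← Finset.sum_filter_add_sum_filter_not (Finset.Icc 1 r) (fun i => i ≠ i') f,
      hfilter, Finset.sum_singleton]
    exact Nat.add_comm _ _
  -- the two Gam values
  have hGam1 : Gam n γ I k 1 = ∑ i ∈ Finset.Icc 1 r, (n-1).choose (k i - 1) := by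
    rw [gam_one (by omega) hγ1 (by omega), hsplit (fun i => (n-1).choose (k i - 1))]
    have : (n-1).choose γ = (n-1).choose (a-1) := by
      have := Nat.choose_symm (n := n-1) (k := a-1) (by omega)
      rw [show (n-1) - (a-1) = γ by omega] at this
      exact this
    rw [this]
  have hGamβ : Gam n γ I k kb = n.choose a - (n - kb).choose a
      + ∑ i ∈ I, (n - kb).choose (k i - kb) := by
    unfold Gam
    have h1 : n.choose γ = n.choose a := by
      have := Nat.choose_symm (n := n) (k := a) (by omega)
      rw [show n - a = γ from rfl] at this
      exact this
    have h2 : (n-kb).choose (γ-kb) = (n-kb).choose a := by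
      have := Nat.choose_symm (n := n-kb) (k := a) (by omega)
      rw [show (n-kb) - a = γ - kb by omega] at this
      exact this
    rw [h1, h2]
  -- final assembly
  have hsumF := hsplit (fun i => (F i).card)
  have hsumsle : ∑ i ∈ I, (F i).card + ∑ i ∈ I, (∂^[γ - k i] C).card
      ≤ ∑ i ∈ I, n.choose (k i) := by
    rw [← Finset.sum_add_distrib]
    exact Finset.sum_le_sum hFi
  rw [hsumF]
  rw [hGam1, hGamβ] at hmain
  have hmaxcomm : max (∑ i ∈ Finset.Icc 1 r, (n-1).choose (k i - 1))
      (n.choose a - (n - kb).choose a + ∑ i ∈ I, (n - kb).choose (k i - kb))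
      = max (n.choose a - (n - kb).choose a + ∑ i ∈ I, (n - kb).choose (k i - kb))
        (∑ i ∈ Finset.Icc 1 r, (n-1).choose (k i - 1)) := max_comm _ _
  rw [hmaxcomm] at hmain
  omega
end
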